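/- arXiv:0706.2649 — 7 statements merged into one kernel-verified Lean document; each statement's English description precedes it below -/
import Mathlib

section
/- Let V and W be finite-dimensional vector spaces over a field K, F an ℝ-filtration of V, G an ℝ-filtration of W, and φ : V → W a K-linear map. (1) Suppose φ is injective. If F = φ*G, then λ_F(x) = λ_G(φ(x)) for every x ∈ V; conversely, if both F and G are left continuous and λ_F(x) = λ_G(φ(x)) for every x ∈ V, then F = φ*G. (2) Suppose φ is surjective. If G = φ_*F, then λ_G(y) = sup_{x ∈ φ^{-1}(y)} λ_F(x) for every y ∈ W; conversely, if both F and G are left continuous and this index formula holds for every y ∈ W, then G = φ_*F. -/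
/-- The index function of an `ℝ`-filtration `F` of a vector space `V`:
`λ(x) = sup {r ∈ ℝ : x ∈ F r}` in `ℝ ∪ {±∞}`, with `sup ∅ = -∞`. -/
noncomputable def filtIndex {K V : Type*} [Field K] [AddCommGroup V] [Module K V]
    (F : ℝ → Submodule K V) (x : V) : EReal :=
  sSup ((fun r : ℝ => (r : EReal)) '' {r : ℝ | x ∈ F r})

section aux

variable {K V : Type*} [Field K] [AddCommGroup V] [Module K V]

lemma filtIndex_ge {F : ℝ → Submodule K V} {x : V} {r : ℝ} (h : x ∈ F r) :
    (r : EReal) ≤ filtIndex F x :=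
  le_sSup ⟨r, h, rfl⟩

lemma mem_of_lt_filtIndex {F : ℝ → Submodule K V} (hF : Antitone F) {x : V} {s : ℝ}
    (h : (s : EReal) < filtIndex F x) : x ∈ F s := by
  obtain ⟨b, ⟨t, ht, rfl⟩, hb⟩ := lt_sSup_iff.mp h
  have hb' : (s : EReal) < (t : EReal) := hb
  exact hF (le_of_lt (by exact_mod_cast hb')) ht

lemma mem_of_le_filtIndex {F : ℝ → Submodule K V} (hF : Antitone F)
    (hFl : ∀ r : ℝ, F r = ⨅ s < r, F s) {x : V} {r : ℝ}
    (h : (r : EReal) ≤ filtIndex F x) : x ∈ F r := by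
  rw [hFl r]
  simp only [Submodule.mem_iInf]
  intro s hs
  exact mem_of_lt_filtIndex hF (lt_of_lt_of_le (by exact_mod_cast hs) h)

lemma coe_le_of_forall_lt {X : EReal} {r : ℝ}
    (h : ∀ s : ℝ, s < r → (s : EReal) ≤ X) : (r : EReal) ≤ X := by
  by_contra hc
  push_neg at hc
  obtain ⟨z, hz1, hz2⟩ := exists_between hc
  induction z using EReal.rec with
  | bot => exact (not_lt_bot hz1).elim
  | coe s =>
    exact absurd (h s (by exact_mod_cast hz2)) (not_le.mpr hz1)
  | top => exact (not_top_lt hz2).elim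

end aux

theorem stmt_5 {K V W : Type*} [Field K] [AddCommGroup V] [Module K V]
    [AddCommGroup W] [Module K W] [FiniteDimensional K V] [FiniteDimensional K W]
    (F : ℝ → Submodule K V) (G : ℝ → Submodule K W)
    (hF : Antitone F) (hG : Antitone G) (φ : V →ₗ[K] W) :
    -- (1) the injective case: `F = φ*G` iff the index is preserved
    (Function.Injective φ →
      (((∀ r : ℝ, F r = (G r).comap φ) →
          ∀ x : V, filtIndex F x = filtIndex G (φ x)) ∧
       ((∀ r : ℝ, F r = ⨅ s < r, F s) → (∀ r : ℝ, G r = ⨅ s < r, G s) →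
          (∀ x : V, filtIndex F x = filtIndex G (φ x)) →
          ∀ r : ℝ, F r = (G r).comap φ))) ∧
    -- (2) the surjective case: `G = φ_*F` iff the index formula holds
    (Function.Surjective φ →
      (((∀ r : ℝ, G r = ⨅ s < r, (F s).map φ) →
          ∀ y : W, filtIndex G y = sSup (filtIndex F '' (φ ⁻¹' {y}))) ∧
       ((∀ r : ℝ, F r = ⨅ s < r, F s) → (∀ r : ℝ, G r = ⨅ s < r, G s) →
          (∀ y : W, filtIndex G y = sSup (filtIndex F '' (φ ⁻¹' {y}))) →
          ∀ r : ℝ, G r = ⨅ s < r, (F s).map φ))) := by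
  refine ⟨fun hinj => ⟨?_, ?_⟩, fun hsurj => ⟨?_, ?_⟩⟩
  · -- (1) forward
    intro h x
    have hset : {r : ℝ | x ∈ F r} = {r : ℝ | φ x ∈ G r} := by
      ext r
      rw [Set.mem_setOf_eq, Set.mem_setOf_eq, h r, Submodule.mem_comap]
    unfold filtIndex
    rw [hset]
  · -- (1) converse
    intro hFl hGl hidx r
    ext x
    rw [Submodule.mem_comap]
    constructor
    · intro hx
      exact mem_of_le_filtIndex hG hGl ((hidx x) ▸ filtIndex_ge hx)
    · intro hx
      exact mem_of_le_filtIndex hF hFl ((hidx x) ▸ filtIndex_ge hx)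
  · -- (2) forward
    intro h y
    apply le_antisymm
    · -- λ_G(y) ≤ sup
      apply sSup_le
      rintro b ⟨r, hr, rfl⟩
      apply coe_le_of_forall_lt
      intro s hs
      have hy : y ∈ (F s).map φ := by
        have hyr : y ∈ G r := hr
        rw [h r] at hyr
        simp only [Submodule.mem_iInf] at hyr
        exact hyr s hs
      obtain ⟨x, hx, rfl⟩ := hy
      exact le_trans (filtIndex_ge hx)
        (le_sSup ⟨x, by simp, rfl⟩)
    · -- sup ≤ λ_G(y)
      apply sSup_le
      rintro b ⟨x, hx, rfl⟩
      simp only [Set.mem_preimage, Set.mem_singleton_iff] at hx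
      apply sSup_le
      rintro b ⟨s, hsx, rfl⟩
      apply filtIndex_ge
      rw [h s]
      simp only [Submodule.mem_iInf]
      intro t ht
      exact ⟨x, hF ht.le hsx, hx⟩
  · -- (2) converse
    intro hFl hGl hidx r
    ext y
    simp only [Submodule.mem_iInf]
    constructor
    · intro hy s hs
      have h1 : (s : EReal) < sSup (filtIndex F '' (φ ⁻¹' {y})) :=
        lt_of_lt_of_le (by exact_mod_cast hs)
          ((hidx y) ▸ filtIndex_ge hy)
      obtain ⟨b, ⟨x, hx, rfl⟩, hb⟩ := lt_sSup_iff.mp h1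
      simp only [Set.mem_preimage, Set.mem_singleton_iff] at hx
      exact ⟨x, mem_of_lt_filtIndex hF hb, hx⟩
    · intro hy
      apply mem_of_le_filtIndex hG hGl
      apply coe_le_of_forall_lt
      intro s hs
      obtain ⟨x, hx, hxy⟩ := hy s hs
      calc (s : EReal) ≤ filtIndex F x := filtIndex_ge hx
        _ ≤ sSup (filtIndex F '' (φ ⁻¹' {y})) := le_sSup ⟨x, by simp [hxy], rfl⟩
        _ = filtIndex G y := (hidx y).symm
end

section
/- Let V be a nonzero finite-dimensional vector space over a field K equipped with a separated, exhaustive and left-continuous ℝ-filtration F. A basis e = (e_1, …, e_n) of V is maximal if and only if, for every real number r, the number of elements of e lying in F_r V equals dim_K(F_r V). -/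
open MeasureTheory
open scoped ENNReal

/-- The Borel probability measure `ν_e = (1/n) ∑ᵢ δ_{λ(eᵢ)}` on `ℝ` associated to a
family `e = (e₁, …, e_n)` of vectors of a filtered vector space. -/
noncomputable def basisMeasure {K V : Type*} [Field K] [AddCommGroup V] [Module K V]
    {n : ℕ} (F : ℝ → Submodule K V) (e : Fin n → V) : Measure ℝ :=
  (n : ℝ≥0∞)⁻¹ • ∑ i : Fin n, Measure.dirac ((filtIndex F (e i)).toReal)

/-- `μ ⪰ ν` : for every bounded increasing function `f : ℝ → ℝ`, `∫ f dν ≤ ∫ f dμ`. -/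
def MeasureRightOf (μ ν : Measure ℝ) : Prop :=
  ∀ f : ℝ → ℝ, Monotone f → (∃ C : ℝ, ∀ x, |f x| ≤ C) →
    ∫ x, f x ∂ν ≤ ∫ x, f x ∂μ

/-- A basis `e` of `V` is maximal if `ν_e ⪰ ν_{e'}` for every basis `e'` of `V`. -/
def MaximalBasis {K V : Type*} [Field K] [AddCommGroup V] [Module K V]
    {n : ℕ} (F : ℝ → Submodule K V) (e : Module.Basis (Fin n) K V) : Prop :=
  ∀ e' : Module.Basis (Fin n) K V, MeasureRightOf (basisMeasure F ⇑e) (basisMeasure F ⇑e')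


section AuxStmt6
open Finset
open scoped Classical

variable {K V : Type*} [Field K] [AddCommGroup V] [Module K V]

lemma filtIndex_toReal_ge_iff {F : ℝ → Submodule K V} (hF : Antitone F)
    (hsep : (⋂ r : ℝ, (F r : Set V)) = {0})
    (hexh : (⋃ r : ℝ, (F r : Set V)) = Set.univ)
    (hlc : ∀ r : ℝ, F r = ⨅ s < r, F s)
    {x : V} (hx : x ≠ 0) (r : ℝ) :
    r ≤ (filtIndex F x).toReal ↔ x ∈ F r := by
  set S : Set ℝ := {s : ℝ | x ∈ F s} with hS
  have hSne : S.Nonempty := by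
    have : x ∈ ⋃ s : ℝ, (F s : Set V) := by rw [hexh]; trivial
    obtain ⟨_, ⟨s, rfl⟩, hs⟩ := this
    exact ⟨s, hs⟩
  have hSbdd : BddAbove S := by
    have : ∃ r₀ : ℝ, x ∉ F r₀ := by
      by_contra h
      push_neg at h
      have : x ∈ ⋂ s : ℝ, (F s : Set V) := Set.mem_iInter.2 fun s => h s
      rw [hsep] at this
      exact hx this
    obtain ⟨r₀, hr₀⟩ := this
    refine ⟨r₀, fun s hs => ?_⟩
    by_contra h
    push_neg at h
    exact hr₀ (hF h.le hs)
  set a : ℝ := sSup S with ha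
  have hfi : filtIndex F x = (a : EReal) := by
    apply le_antisymm
    · apply sSup_le
      rintro _ ⟨s, hs, rfl⟩
      show (s:EReal) ≤ (a:EReal)
      exact_mod_cast le_csSup hSbdd hs
    · rw [show filtIndex F x = sSup ((fun r : ℝ => (r : EReal)) '' S) from rfl, le_sSup_iff]
      intro b hb
      rcases eq_top_or_lt_top b with rfl | hbt
      · exact le_top
      have hbb : ∀ s ∈ S, (s : EReal) ≤ b := fun s hs => hb ⟨s, hs, rfl⟩
      have hbne : b ≠ ⊥ := by
        obtain ⟨s, hs⟩ := hSne
        intro h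
        have := hbb s hs
        rw [h] at this
        exact (EReal.coe_ne_bot s) (le_bot_iff.1 this)
      have hbc : b = ((b.toReal : ℝ) : EReal) := (EReal.coe_toReal hbt.ne hbne).symm
      rw [hbc]
      norm_cast
      apply csSup_le hSne
      intro s hs
      have := hbb s hs
      rw [hbc] at this
      exact_mod_cast this
  rw [hfi, EReal.toReal_coe]
  constructor
  · intro hra
    rw [hlc r]
    rw [Submodule.mem_iInf]
    intro s
    rw [Submodule.mem_iInf]
    intro hsr
    obtain ⟨u, hu, hsu⟩ := exists_lt_of_lt_csSup hSne (lt_of_lt_of_le hsr hra)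
    exact hF hsu.le hu
  · intro hxr
    exact le_csSup hSbdd hxr


lemma integral_basisMeasure {n : ℕ} (F : ℝ → Submodule K V) (e : Fin n → V)
    {f : ℝ → ℝ} (hf : Monotone f) (hb : ∃ C : ℝ, ∀ x, |f x| ≤ C) :
    ∫ x, f x ∂(basisMeasure F e) = (n : ℝ)⁻¹ * ∑ i : Fin n, f ((filtIndex F (e i)).toReal) := by
  obtain ⟨C, hC⟩ := hb
  have hint : ∀ a : ℝ, Integrable f (Measure.dirac a) := by
    intro a
    refine (integrable_const C).mono' hf.measurable.aestronglyMeasurable ?_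
    filter_upwards with x
    simpa using hC x
  rw [basisMeasure, integral_smul_measure, integral_finset_sum_measure (fun i _ => hint _)]
  simp only [integral_dirac]
  simp



lemma count_perm {n : ℕ} (s : Fin n → ℝ) (σ : Equiv.Perm (Fin n)) (c : ℝ) :
    (univ.filter (fun i => c ≤ s (σ i))).card = (univ.filter (fun i => c ≤ s i)).card := by
  apply Finset.card_bij (fun i _ => σ i)
  · intro a ha; simp only [mem_filter, mem_univ, true_and] at *; exact ha
  · intro a₁ _ a₂ _ h; exact σ.injective h
  · intro b hb
    refine ⟨σ.symm b, ?_, by simp⟩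
    simp only [mem_filter, mem_univ, true_and] at *
    simpa using hb

lemma sorted_le_of_counts {n : ℕ} {u v : Fin n → ℝ} (hu : Monotone u) (hv : Monotone v)
    (h : ∀ r : ℝ, (univ.filter (fun i => r ≤ u i)).card ≤ (univ.filter (fun i => r ≤ v i)).card)
    (k : Fin n) : u k ≤ v k := by
  by_contra hlt
  push_neg at hlt
  have h1 : (Finset.Ici k) ⊆ univ.filter (fun i => u k ≤ u i) := by
    intro i hi
    simp only [mem_filter, mem_univ, true_and]
    exact hu (Finset.mem_Ici.1 hi)
  have h2 : univ.filter (fun i => u k ≤ v i) ⊆ Finset.Ioi k := by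
    intro i hi
    simp only [mem_filter, mem_univ, true_and] at hi
    rw [Finset.mem_Ioi]
    by_contra hik
    push_neg at hik
    exact absurd (le_trans hi (hv hik)) (not_le.2 hlt)
  have c1 : n - (k : ℕ) ≤ (univ.filter (fun i => u k ≤ v i)).card := by
    calc n - (k : ℕ) = (Finset.Ici k).card := (Fin.card_Ici k).symm
    _ ≤ (univ.filter (fun i => u k ≤ u i)).card := Finset.card_le_card h1
    _ ≤ _ := h _
  have c2 : (univ.filter (fun i => u k ≤ v i)).card ≤ n - 1 - (k : ℕ) := by
    calc _ ≤ (Finset.Ioi k).card := Finset.card_le_card h2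
    _ = n - 1 - (k : ℕ) := Fin.card_Ioi k
  have hk := k.2
  omega

lemma sum_mono_le_of_counts {n : ℕ} (s t : Fin n → ℝ)
    (h : ∀ r : ℝ, (univ.filter (fun i => r ≤ s i)).card ≤ (univ.filter (fun i => r ≤ t i)).card)
    {f : ℝ → ℝ} (hf : Monotone f) :
    ∑ i, f (s i) ≤ ∑ i, f (t i) := by
  set σ := Tuple.sort s
  set τ := Tuple.sort t
  have hu : Monotone (s ∘ σ) := Tuple.monotone_sort s
  have hv : Monotone (t ∘ τ) := Tuple.monotone_sort t
  have hcounts : ∀ r : ℝ, (univ.filter (fun i => r ≤ (s ∘ σ) i)).card ≤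
      (univ.filter (fun i => r ≤ (t ∘ τ) i)).card := by
    intro r
    simpa [count_perm s σ r, count_perm t τ r] using h r
  have key : ∀ k, (s ∘ σ) k ≤ (t ∘ τ) k := sorted_le_of_counts hu hv hcounts
  calc ∑ i, f (s i) = ∑ i, f (s (σ i)) := (Equiv.sum_comp σ (fun i => f (s i))).symm
  _ ≤ ∑ i, f (t (τ i)) := Finset.sum_le_sum (fun i _ => hf (key i))
  _ = ∑ i, f (t i) := Equiv.sum_comp τ (fun i => f (t i))


lemma count_le_finrank [FiniteDimensional K V] {n : ℕ} (e' : Module.Basis (Fin n) K V)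
    (W : Submodule K V) :
    (univ.filter (fun i => e' i ∈ W)).card ≤ Module.finrank K W := by
  classical
  set s := univ.filter (fun i => e' i ∈ W) with hs
  have hg : LinearIndependent K (fun i : {i // i ∈ s} => (⟨e' i.1, (Finset.mem_filter.1 i.2).2⟩ : W)) := by
    apply LinearIndependent.of_comp W.subtype
    have : (⇑W.subtype ∘ fun i : {i // i ∈ s} => (⟨e' i.1, (Finset.mem_filter.1 i.2).2⟩ : W)) =
        (⇑e' ∘ fun i : {i // i ∈ s} => i.1) := rfl
    rw [this]
    exact e'.linearIndependent.comp _ Subtype.val_injective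
  simpa using hg.fintype_card_le_finrank

lemma exists_adapted : ∀ (m : ℕ) (𝒞 : Finset (Submodule K V)), 𝒞.card = m →
    (∀ A ∈ 𝒞, ∀ B ∈ 𝒞, A ≤ B ∨ B ≤ A) → ∀ (T : Submodule K V), (∀ W ∈ 𝒞, W ≤ T) →
    ∃ b : Set V, b ⊆ (T : Set V) ∧ LinearIndependent K ((↑) : b → V) ∧
      (T : Set V) ⊆ Submodule.span K b ∧
      ∀ W ∈ 𝒞, (W : Set V) ⊆ Submodule.span K (b ∩ W) := by
  intro m
  induction m with
  | zero =>
    intro 𝒞 hcard _ T _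
    rw [Finset.card_eq_zero] at hcard
    subst hcard
    obtain ⟨b, hbT, hspan, hli⟩ := exists_linearIndependent K (T : Set V)
    exact ⟨b, hbT, hli, by rw [hspan]; exact Submodule.subset_span, by simp⟩
  | succ m ih =>
    intro 𝒞 hcard hchain T hT
    have hne : 𝒞.Nonempty := Finset.card_pos.1 (by omega)
    obtain ⟨M, hM, hMmax⟩ := 𝒞.exists_maximal hne
    have hMtop : ∀ W ∈ 𝒞, W ≤ M := by
      intro W hW
      rcases hchain W hW M hM with h | h
      · exact h
      · by_contra hWM
        exact hWM (hMmax hW h)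
    obtain ⟨s, hsM, hsli, hsspan, hsad⟩ := ih (𝒞.erase M) (by rw [Finset.card_erase_of_mem hM, hcard]; rfl)
      (fun A hA B hB => hchain A (Finset.mem_of_mem_erase hA) B (Finset.mem_of_mem_erase hB))
      M (fun W hW => hMtop W (Finset.mem_of_mem_erase hW))
    have hsT : s ⊆ (T : Set V) := hsM.trans (hT M hM)
    have hsli : LinearIndepOn K id s := hsli
    refine ⟨hsli.extend hsT, hsli.extend_subset hsT, hsli.linearIndepOn_extend hsT,
      hsli.subset_span_extend hsT, ?_⟩
    intro W hW
    rcases eq_or_ne W M with rfl | hWM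
    · calc (W : Set V) ⊆ Submodule.span K s := hsspan
      _ ⊆ Submodule.span K (hsli.extend hsT ∩ W) :=
        Submodule.span_mono (Set.subset_inter (hsli.subset_extend hsT) hsM)
    · calc (W : Set V) ⊆ Submodule.span K (s ∩ W) := hsad W (Finset.mem_erase.2 ⟨hWM, hW⟩)
      _ ⊆ Submodule.span K (hsli.extend hsT ∩ W) :=
        Submodule.span_mono (Set.inter_subset_inter_left _ (hsli.subset_extend hsT))

open Module in
lemma exists_adapted_basis [FiniteDimensional K V] {n : ℕ}
    (hn : Module.finrank K V = n) (F : ℝ → Submodule K V) (hF : Antitone F) :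
    ∃ e'' : Basis (Fin n) K V, ∀ r : ℝ,
      (univ.filter (fun i => e'' i ∈ F r)).card = Module.finrank K (F r) := by
  have hfin : (Set.range F).Finite := by
    apply Set.Finite.of_finite_image (f := fun W : Submodule K V => Module.finrank K W)
    · apply (Set.finite_Iic (Module.finrank K V)).subset
      rintro _ ⟨W, ⟨r, rfl⟩, rfl⟩
      exact Submodule.finrank_le (F r)
    · rintro _ ⟨r₁, rfl⟩ _ ⟨r₂, rfl⟩ h
      rcases le_total r₁ r₂ with hr | hr
      · exact (Submodule.eq_of_le_of_finrank_le (hF hr) h.le).symm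
      · exact Submodule.eq_of_le_of_finrank_le (hF hr) h.ge
  set 𝒞 : Finset (Submodule K V) := hfin.toFinset with h𝒞
  have hchain : ∀ A ∈ 𝒞, ∀ B ∈ 𝒞, A ≤ B ∨ B ≤ A := by
    intro A hA B hB
    rw [h𝒞, Set.Finite.mem_toFinset] at hA hB
    obtain ⟨r₁, rfl⟩ := hA
    obtain ⟨r₂, rfl⟩ := hB
    rcases le_total r₁ r₂ with hr | hr
    · exact Or.inr (hF hr)
    · exact Or.inl (hF hr)
  obtain ⟨b, _, hli, hspan, had⟩ := exists_adapted 𝒞.card 𝒞 rfl hchain ⊤ (fun W _ => le_top)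
  have hbfin : b.Finite := by
    have : Finite ↥b := hli.finite
    exact Set.toFinite b
  haveI := hbfin.fintype
  have htop : ⊤ ≤ Submodule.span K (Set.range (Subtype.val : b → V)) := by
    rw [Subtype.range_coe]
    intro x _
    exact hspan (Submodule.mem_top (R := K))
  let B : Basis ↥b K V := Basis.mk hli htop
  have hcard : Fintype.card ↥b = n := by
    rw [← Module.finrank_eq_card_basis B, hn]
  let q : ↥b ≃ Fin n := Fintype.equivFinOfCardEq hcard
  let e'' : Basis (Fin n) K V := B.reindex q
  have he : ∀ i : Fin n, e'' i = ↑(q.symm i) := by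
    intro i
    show (B.reindex q) i = _
    rw [Basis.reindex_apply]
    show (Basis.mk hli htop) _ = _
    rw [Basis.coe_mk]
  refine ⟨e'', fun r => ?_⟩
  set s : Set V := b ∩ (F r : Set V) with hsdef
  haveI : Fintype ↥s := (hbfin.inter_of_left _).fintype
  have hmem𝒞 : F r ∈ 𝒞 := by rw [h𝒞, Set.Finite.mem_toFinset]; exact ⟨r, rfl⟩
  have hspans : Submodule.span K s = F r := by
    apply le_antisymm
    · rw [Submodule.span_le]
      exact Set.inter_subset_right
    · intro x hx
      exact had (F r) hmem𝒞 hx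
  have hfr : Module.finrank K (F r) = s.toFinset.card := by
    rw [← hspans]
    exact finrank_span_set_eq_card (LinearIndepOn.mono (show LinearIndepOn K id b from hli) Set.inter_subset_left)
  have key : ∀ i : Fin n, (e'' i ∈ F r ↔ ((q.symm i : V) ∈ F r)) := by
    intro i; rw [he i]
  let E : {i : Fin n // e'' i ∈ F r} ≃ ↥s :=
  { toFun := fun i => ⟨(q.symm i.1 : V), ⟨(q.symm i.1).2, (key i.1).1 i.2⟩⟩
    invFun := fun x => ⟨q ⟨x.1, x.2.1⟩, (key _).2 (by rw [Equiv.symm_apply_apply]; exact x.2.2)⟩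
    left_inv := fun i => by
      apply Subtype.ext
      simp
    right_inv := fun x => by
      apply Subtype.ext
      simp }
  calc (univ.filter (fun i => e'' i ∈ F r)).card
      = Fintype.card {i : Fin n // e'' i ∈ F r} := (Fintype.card_subtype _).symm
    _ = Fintype.card ↥s := Fintype.card_congr E
    _ = s.toFinset.card := (Set.toFinset_card s).symm
    _ = Module.finrank K (F r) := hfr.symm


end AuxStmt6

theorem stmt_6 {K V : Type*} [Field K] [AddCommGroup V] [Module K V] {n : ℕ}
    (hn : 0 < n) (F : ℝ → Submodule K V) (hF : Antitone F)
    (hsep : (⋂ r : ℝ, (F r : Set V)) = {0})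
    (hexh : (⋃ r : ℝ, (F r : Set V)) = Set.univ)
    (hlc : ∀ r : ℝ, F r = ⨅ s < r, F s)
    (e : Module.Basis (Fin n) K V) :
    MaximalBasis F e ↔
      ∀ r : ℝ, {i : Fin n | e i ∈ F r}.ncard = Module.finrank K (F r) := by
  classical
  haveI : FiniteDimensional K V := Module.Finite.of_basis e
  have hnV : Module.finrank K V = n := by
    rw [Module.finrank_eq_card_basis e, Fintype.card_fin]
  have hcount : ∀ (e' : Module.Basis (Fin n) K V) (r : ℝ),
      {i : Fin n | e' i ∈ F r}.ncard = (Finset.univ.filter (fun i => e' i ∈ F r)).card := by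
    intro e' r
    rw [Set.ncard_eq_toFinset_card', Set.toFinset_setOf]
  have hidx : ∀ (e' : Module.Basis (Fin n) K V) (r : ℝ) (i : Fin n),
      (r ≤ (filtIndex F (e' i)).toReal) ↔ e' i ∈ F r :=
    fun e' r i => filtIndex_toReal_ge_iff hF hsep hexh hlc (e'.ne_zero i) r
  have hpos : (0:ℝ) < (n:ℝ)⁻¹ := by
    have : (0:ℝ) < (n:ℝ) := by exact_mod_cast hn
    positivity
  constructor
  · intro hmax r
    rw [hcount e r]
    apply le_antisymm
    · exact count_le_finrank e (F r)
    · obtain ⟨e'', he''⟩ := exists_adapted_basis hnV F hF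
      set f : ℝ → ℝ := fun x => if r ≤ x then 1 else 0 with hfdef
      have hf : Monotone f := by
        intro a b hab
        simp only [hfdef]
        split_ifs with h1 h2
        · exact le_rfl
        · exact absurd (h1.trans hab) h2
        · norm_num
        · exact le_rfl
      have hfb : ∃ C : ℝ, ∀ x, |f x| ≤ C :=
        ⟨1, fun x => by simp only [hfdef]; split_ifs <;> norm_num⟩
      have hsc : ∀ (e' : Module.Basis (Fin n) K V), ∑ i : Fin n, f ((filtIndex F (e' i)).toReal)
          = ((Finset.univ.filter (fun i => e' i ∈ F r)).card : ℝ) := by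
        intro e'
        rw [show (fun i : Fin n => f ((filtIndex F (e' i)).toReal))
            = fun i : Fin n => if e' i ∈ F r then (1:ℝ) else 0 from funext fun i => by
          simp only [hfdef]
          by_cases h : e' i ∈ F r
          · rw [if_pos ((hidx e' r i).2 h), if_pos h]
          · rw [if_neg (fun hc => h ((hidx e' r i).1 hc)), if_neg h]]
        rw [Finset.sum_boole]
      have hle := hmax e'' f hf hfb
      rw [integral_basisMeasure F ⇑e'' hf hfb, integral_basisMeasure F ⇑e hf hfb,
        hsc e'', hsc e] at hle
      have hsum := le_of_mul_le_mul_left hle hpos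
      have : (Finset.univ.filter (fun i => e'' i ∈ F r)).card
          ≤ (Finset.univ.filter (fun i => e i ∈ F r)).card := by exact_mod_cast hsum
      rw [he'' r] at this
      exact this
  · intro hcnt e' f hf hfb
    rw [integral_basisMeasure F ⇑e' hf hfb, integral_basisMeasure F ⇑e hf hfb]
    apply mul_le_mul_of_nonneg_left _ hpos.le
    apply sum_mono_le_of_counts _ _ _ hf
    intro r
    rw [Finset.filter_congr (fun i _ => hidx e' r i),
      Finset.filter_congr (fun i _ => hidx e r i)]
    calc (Finset.univ.filter (fun i => e' i ∈ F r)).card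
        ≤ Module.finrank K (F r) := count_le_finrank e' (F r)
      _ = (Finset.univ.filter (fun i => e i ∈ F r)).card := by
          rw [← hcnt r, hcount e r]
end

section
/- Let 0 → V' →^φ V →^ψ V'' → 0 be a short exact sequence of finite-dimensional vector spaces over a field K equipped with left-continuous ℝ-filtrations. Suppose that V is nonzero and its filtration F is separated and exhaustive, that the filtration of V' is the inverse image φ*F, and that the filtration of V'' is the strong direct image ψ_*F. Then ν_V = (dim V'/dim V)·ν_{V'} + (dim V''/dim V)·ν_{V''}. -/
open MeasureTheory
open scoped ENNReal

theorem stmt_8 {K V' V V'' : Type*} [Field K]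
    [AddCommGroup V'] [Module K V'] [AddCommGroup V] [Module K V]
    [AddCommGroup V''] [Module K V''] [FiniteDimensional K V]
    (φ : V' →ₗ[K] V) (ψ : V →ₗ[K] V'')
    (hφ : Function.Injective φ) (hψ : Function.Surjective ψ)
    (hexact : LinearMap.range φ = LinearMap.ker ψ)
    (hV : Nontrivial V)
    -- the filtration `F` of `V` is left continuous, separated and exhaustive
    (F : ℝ → Submodule K V) (hF : Antitone F)
    (hlc : ∀ r : ℝ, F r = ⨅ s < r, F s)
    (hsep : (⋂ r : ℝ, (F r : Set V)) = {0})
    (hexh : (⋃ r : ℝ, (F r : Set V)) = Set.univ)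
    -- the filtration of `V'` is the inverse image `φ*F`
    (F' : ℝ → Submodule K V') (hF' : ∀ r : ℝ, F' r = (F r).comap φ)
    -- the filtration of `V''` is the strong direct image `ψ_*F`
    (F'' : ℝ → Submodule K V'') (hF'' : ∀ r : ℝ, F'' r = ⨅ s < r, (F s).map ψ)
    -- `μ`, `μ'`, `μ''` are the associated measures, characterised by
    -- `ν([r, +∞)) = dim (F_r) / dim`
    (μ μ' μ'' : Measure ℝ)
    (hμ : ∀ r : ℝ, μ (Set.Ici r)
      = (Module.finrank K (F r) : ℝ≥0∞) / (Module.finrank K V : ℝ≥0∞))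
    (hμ' : ∀ r : ℝ, μ' (Set.Ici r)
      = (Module.finrank K (F' r) : ℝ≥0∞) / (Module.finrank K V' : ℝ≥0∞))
    (hμ'' : ∀ r : ℝ, μ'' (Set.Ici r)
      = (Module.finrank K (F'' r) : ℝ≥0∞) / (Module.finrank K V'' : ℝ≥0∞)) :
    μ = ((Module.finrank K V' : ℝ≥0∞) / (Module.finrank K V : ℝ≥0∞)) • μ'
        + ((Module.finrank K V'' : ℝ≥0∞) / (Module.finrank K V : ℝ≥0∞)) • μ'' := by
  classical
  haveI : FiniteDimensional K V' := FiniteDimensional.of_injective φ hφ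
  haveI : FiniteDimensional K V'' := Module.Finite.of_surjective ψ hψ
  -- near any r the filtration stabilises
  have hmin : ∀ r : ℝ, ∃ s, s < r ∧ ∀ t, t < r → F s ≤ F t := by
    intro r
    set S : Set ℕ := {d : ℕ | ∃ s, s < r ∧ Module.finrank K (F s) = d} with hS
    have hne : S.Nonempty := ⟨_, r - 1, by linarith, rfl⟩
    obtain ⟨s₀, hs₀, hd⟩ := Nat.sInf_mem hne
    refine ⟨s₀, hs₀, fun t ht => ?_⟩
    have h1 : F (max s₀ t) ≤ F s₀ := hF (le_max_left _ _)
    have h2 : F (max s₀ t) ≤ F t := hF (le_max_right _ _)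
    have hmem : Module.finrank K (F (max s₀ t)) ∈ S := ⟨max s₀ t, max_lt hs₀ ht, rfl⟩
    have heq : F (max s₀ t) = F s₀ :=
      Submodule.eq_of_le_of_finrank_le h1 (by rw [hd]; exact Nat.sInf_le hmem)
    exact heq ▸ h2
  -- the strong direct image is simply the image
  have hmap : ∀ r : ℝ, F'' r = (F r).map ψ := by
    intro r
    obtain ⟨s₀, hs₀, hs₀min⟩ := hmin r
    have h1 : (⨅ s, ⨅ _ : s < r, F s) ≤ F s₀ := iInf_le_of_le s₀ (iInf_le _ hs₀)
    have h2 : F s₀ ≤ ⨅ s, ⨅ _ : s < r, F s := le_iInf₂ hs₀min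
    have hFr : F r = F s₀ := by rw [hlc r]; exact le_antisymm h1 h2
    have h3 : (⨅ s, ⨅ _ : s < r, (F s).map ψ) ≤ (F s₀).map ψ := iInf_le_of_le s₀ (iInf_le _ hs₀)
    have h4 : (F s₀).map ψ ≤ ⨅ s, ⨅ _ : s < r, (F s).map ψ :=
      le_iInf₂ fun t ht => Submodule.map_mono (hs₀min t ht)
    rw [hF'', hFr]
    exact le_antisymm h3 h4
  -- dimension count
  have dimeq : ∀ r : ℝ, Module.finrank K (F r)
      = Module.finrank K (F' r) + Module.finrank K (F'' r) := by
    intro r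
    have hrk := LinearMap.finrank_range_add_finrank_ker (ψ.comp (F r).subtype)
    have hrange : LinearMap.range (ψ.comp (F r).subtype) = (F r).map ψ := by
      rw [LinearMap.range_comp, Submodule.range_subtype]
    have hker : Module.finrank K (LinearMap.ker (ψ.comp (F r).subtype))
        = Module.finrank K (F' r) := by
      have h1 : Module.finrank K (LinearMap.ker (ψ.comp (F r).subtype))
          = Module.finrank K ((LinearMap.ker (ψ.comp (F r).subtype)).map (F r).subtype) :=
        (Submodule.equivMapOfInjective _ (F r).injective_subtype _).finrank_eq
      have h2 : (LinearMap.ker (ψ.comp (F r).subtype)).map (F r).subtype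
          = F r ⊓ LinearMap.ker ψ := by
        rw [LinearMap.ker_comp, Submodule.map_comap_subtype]
      have h3 : Module.finrank K (F' r) = Module.finrank K ((F' r).map φ) :=
        (Submodule.equivMapOfInjective _ hφ _).finrank_eq
      have h4 : (F' r).map φ = F r ⊓ LinearMap.ker ψ := by
        rw [hF', Submodule.map_comap_eq, hexact, inf_comm]
      rw [h1, h2, h3, h4]
    rw [hrange, ← hmap r] at hrk
    rw [← hker]
    omega
  -- global dimension count
  have dimV : Module.finrank K V = Module.finrank K V' + Module.finrank K V'' := by
    have hrk := LinearMap.finrank_range_add_finrank_ker ψ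
    rw [LinearMap.range_eq_top.2 hψ, finrank_top, ← hexact,
      LinearMap.finrank_range_of_inj hφ] at hrk
    omega
  have hn : (Module.finrank K V : ℝ≥0∞) ≠ 0 := by
    simp [Module.finrank_pos.ne']
  have hnt : (Module.finrank K V : ℝ≥0∞) ≠ ∞ := ENNReal.natCast_ne_top _
  -- arithmetic helper
  have aux : ∀ m d : ℕ, d ≤ m →
      ((m : ℝ≥0∞) / (Module.finrank K V : ℝ≥0∞)) * ((d : ℝ≥0∞) / (m : ℝ≥0∞))
        = (d : ℝ≥0∞) / (Module.finrank K V : ℝ≥0∞) := by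
    intro m d hdm
    rcases Nat.eq_zero_or_pos m with hm | hm
    · subst hm
      interval_cases d
      simp
    · have hm0 : (m : ℝ≥0∞) ≠ 0 := Nat.cast_ne_zero.2 hm.ne'
      have hmt : (m : ℝ≥0∞) ≠ ∞ := ENNReal.natCast_ne_top m
      rw [div_eq_mul_inv, div_eq_mul_inv, div_eq_mul_inv]
      calc (m : ℝ≥0∞) * (Module.finrank K V : ℝ≥0∞)⁻¹ * ((d : ℝ≥0∞) * (m : ℝ≥0∞)⁻¹)
          = ((m : ℝ≥0∞) * (m : ℝ≥0∞)⁻¹) * ((d : ℝ≥0∞) * (Module.finrank K V : ℝ≥0∞)⁻¹) := by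
            ring
        _ = (d : ℝ≥0∞) * (Module.finrank K V : ℝ≥0∞)⁻¹ := by
            rw [ENNReal.mul_inv_cancel hm0 hmt, one_mul]
  -- the key pointwise identity
  set ν : Measure ℝ := ((Module.finrank K V' : ℝ≥0∞) / (Module.finrank K V : ℝ≥0∞)) • μ'
        + ((Module.finrank K V'' : ℝ≥0∞) / (Module.finrank K V : ℝ≥0∞)) • μ'' with hν
  have key : ∀ r : ℝ, μ (Set.Ici r) = ν (Set.Ici r) := by
    intro r
    rw [hν, Measure.add_apply, Measure.smul_apply, Measure.smul_apply, smul_eq_mul,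
      smul_eq_mul, hμ, hμ', hμ'', aux _ _ (Submodule.finrank_le (F' r)),
      aux _ _ (Submodule.finrank_le (F'' r)), dimeq r, Nat.cast_add, ENNReal.add_div]
  -- equality of total masses
  have huniv : (Set.univ : Set ℝ) = ⋃ n : ℕ, Set.Ici (-(n : ℝ)) := by
    ext x
    simp only [Set.mem_univ, Set.mem_iUnion, Set.mem_Ici, true_iff]
    obtain ⟨n, hn⟩ := exists_nat_ge (-x)
    exact ⟨n, by linarith⟩
  have hdir : Directed (· ⊆ ·) fun n : ℕ => Set.Ici (-(n : ℝ)) := by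
    refine Monotone.directed_le fun a b hab => ?_
    exact Set.Ici_subset_Ici.2 (by exact_mod_cast neg_le_neg (by exact_mod_cast hab))
  have hμuniv : ∀ (m : Measure ℝ), m Set.univ = ⨆ n : ℕ, m (Set.Ici (-(n : ℝ))) := by
    intro m
    rw [huniv, hdir.measure_iUnion]
  have htot : μ Set.univ = ν Set.univ := by
    rw [hμuniv μ, hμuniv ν]
    exact iSup_congr fun n => key _
  haveI : IsFiniteMeasure μ := by
    constructor
    rw [hμuniv μ]
    refine lt_of_le_of_lt (iSup_le fun n => ?_) (by exact ENNReal.one_lt_top)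
    rw [hμ]
    calc (Module.finrank K (F (-(n:ℝ))) : ℝ≥0∞) / (Module.finrank K V : ℝ≥0∞)
        ≤ (Module.finrank K V : ℝ≥0∞) / (Module.finrank K V : ℝ≥0∞) :=
          ENNReal.div_le_div_right (by exact_mod_cast Submodule.finrank_le _) _
      _ = 1 := ENNReal.div_self hn hnt
  refine ext_of_generate_finite (Set.range Set.Ici) ?_ isPiSystem_Ici ?_ htot
  · exact (borel_eq_generateFrom_Ici ℝ) ▸ BorelSpace.measurable_eq
  · rintro s ⟨r, rfl⟩
    exact key r
end

section
/- Let (a_n)_{n≥1} be a sequence of nonnegative real numbers and f : ℤ_{>0} → ℝ a function with lim_{n→∞} f(n)/n = 0. Suppose there exists an integer n₀ > 0 such that for every integer l ≥ 2 and every tuple (n_1, …, n_l) of integers all ≥ n₀, one has a_{n_1 + ⋯ + n_l} ≤ a_{n_1} + ⋯ + a_{n_l} + f(n_1) + ⋯ + f(n_l). Then the sequence (a_n/n)_{n≥1} converges to a limit in ℝ_{≥0}. -/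
open Filter

theorem stmt_9 (a : ℕ → ℝ) (ha : ∀ n : ℕ, 1 ≤ n → 0 ≤ a n)
    (f : ℕ → ℝ) (hf : Tendsto (fun n : ℕ => f n / n) atTop (nhds 0))
    (h : ∃ n₀ : ℕ, 0 < n₀ ∧ ∀ l : ℕ, 2 ≤ l → ∀ ns : Fin l → ℕ,
      (∀ i, n₀ ≤ ns i) →
      a (∑ i, ns i) ≤ ∑ i, a (ns i) + ∑ i, f (ns i)) :
    ∃ L : ℝ, 0 ≤ L ∧ Tendsto (fun n : ℕ => a n / n) atTop (nhds L) := by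
  obtain ⟨n₀, hn₀, key⟩ := h
  -- helper : one block of size r plus (k+1) blocks of size m
  have helper : ∀ (k m r : ℕ), n₀ ≤ m → n₀ ≤ r →
      a (r + (k + 1) * m) ≤ (a r + f r) + ((k : ℝ) + 1) * (a m + f m) := by
    intro k m r hm hr
    have h2 : 2 ≤ k + 2 := by omega
    have hns : ∀ i, n₀ ≤ (Fin.cons r (fun _ : Fin (k + 1) => m) : Fin (k + 2) → ℕ) i := by
      intro i
      refine Fin.cases ?_ ?_ i <;> simp [hr, hm]
    have hk := key (k + 2) h2 (Fin.cons r (fun _ : Fin (k + 1) => m)) hns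
    have hsum : (∑ i : Fin (k + 2), (Fin.cons r (fun _ : Fin (k + 1) => m) : Fin (k + 2) → ℕ) i)
        = r + (k + 1) * m := by
      simp [Fin.sum_univ_succ, Finset.sum_const, mul_comm]
    rw [hsum] at hk
    have hsa : (∑ i : Fin (k + 2), a ((Fin.cons r (fun _ : Fin (k + 1) => m) : Fin (k + 2) → ℕ) i))
        = a r + ((k : ℝ) + 1) * a m := by
      simp [Fin.sum_univ_succ, Finset.sum_const, nsmul_eq_mul]
      try (push_cast; ring)
    have hsf : (∑ i : Fin (k + 2), f ((Fin.cons r (fun _ : Fin (k + 1) => m) : Fin (k + 2) → ℕ) i))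
        = f r + ((k : ℝ) + 1) * f m := by
      simp [Fin.sum_univ_succ, Finset.sum_const, nsmul_eq_mul]
      try (push_cast; ring)
    rw [hsa, hsf] at hk
    linarith
  -- threshold where |f n / n| ≤ 1
  obtain ⟨N₁, hN₁⟩ : ∃ N₁ : ℕ, ∀ n, N₁ ≤ n → |f n / n| ≤ 1 := by
    obtain ⟨N₁, hN₁⟩ := Metric.tendsto_atTop.mp hf 1 one_pos
    exact ⟨N₁, fun n hn => by
      have := hN₁ n hn
      rw [Real.dist_eq, sub_zero] at this
      exact this.le⟩
  set N : ℕ := max (max n₀ N₁) 1 with hN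
  have hNn₀ : n₀ ≤ N := le_trans (le_max_left _ _) (le_max_left _ _)
  have hNN₁ : N₁ ≤ N := le_trans (le_max_right _ _) (le_max_left _ _)
  have hN1 : 1 ≤ N := le_max_right _ _
  set S : Set ℝ := (fun m : ℕ => (a m + f m) / m) '' {m : ℕ | N ≤ m} with hS
  have hSne : S.Nonempty := ⟨(a N + f N) / N, N, by simp, rfl⟩
  have hSbd : BddBelow S := by
    refine ⟨-1, ?_⟩
    rintro x ⟨m, hm, rfl⟩
    have hm1 : 1 ≤ m := le_trans hN1 hm
    have hmpos : (0 : ℝ) < m := by exact_mod_cast hm1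
    have h1 : 0 ≤ a m / m := div_nonneg (ha m hm1) hmpos.le
    have h2 : -1 ≤ f m / m := neg_le_of_abs_le (hN₁ m (le_trans hNN₁ hm))
    show -1 ≤ (a m + f m) / (m : ℝ)
    rw [add_div]
    linarith
  set L : ℝ := sInf S with hLdef
  have hL_le : ∀ m : ℕ, N ≤ m → L ≤ (a m + f m) / m := fun m hm =>
    csInf_le hSbd ⟨m, hm, rfl⟩
  have htend : Tendsto (fun n : ℕ => a n / n) atTop (nhds L) := by
    rw [Metric.tendsto_atTop]
    intro ε hε
    have hε4 : (0 : ℝ) < ε / 4 := by linarith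
    -- lower bound
    have hlow : ∀ᶠ n : ℕ in atTop, L - ε < a n / n := by
      have h1 : ∀ᶠ n : ℕ in atTop, f n / n < ε := hf.eventually (gt_mem_nhds hε)
      filter_upwards [h1, eventually_ge_atTop N] with n hfn hn
      have hle := hL_le n hn
      rw [add_div] at hle
      linarith
    -- choose a good m
    have hLlt : L < L + ε / 2 := by linarith
    obtain ⟨x, hxS, hx⟩ := exists_lt_of_csInf_lt hSne hLlt
    obtain ⟨m, hmN, rfl⟩ := hxS
    have hm1 : 1 ≤ m := le_trans hN1 hmN
    have hmpos : 0 < m := hm1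
    have hmposR : (0 : ℝ) < m := by exact_mod_cast hm1
    have hmn₀ : n₀ ≤ m := le_trans hNn₀ hmN
    have hfm : a m + f m ≤ (m : ℝ) * (L + ε / 2) := by
      have := (div_lt_iff₀ hmposR).mp hx
      linarith
    set C : ℝ := ∑ j ∈ Finset.range m, |a (m + j) + f (m + j)| with hC
    have hCle : ∀ j, j < m → a (m + j) + f (m + j) ≤ C := by
      intro j hj
      calc a (m + j) + f (m + j) ≤ |a (m + j) + f (m + j)| := le_abs_self _
        _ ≤ C := Finset.single_le_sum (f := fun j => |a (m + j) + f (m + j)|)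
            (fun i _ => abs_nonneg _) (Finset.mem_range.mpr hj)
    set x := L + ε / 2 with hxdef
    have e1 : ∀ᶠ n : ℕ in atTop, C / n < ε / 4 :=
      (tendsto_const_div_atTop_nhds_zero_nat C).eventually (gt_mem_nhds hε4)
    have e2 : ∀ᶠ n : ℕ in atTop, (2 * (m : ℝ) * |x|) / n < ε / 4 :=
      (tendsto_const_div_atTop_nhds_zero_nat (2 * (m : ℝ) * |x|)).eventually (gt_mem_nhds hε4)
    have hup : ∀ᶠ n : ℕ in atTop, a n / n < L + ε := by
      filter_upwards [e1, e2, eventually_ge_atTop (2 * m)] with n he1 he2 hn2m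
      have hnpos : 0 < n := by omega
      have hnposR : (0 : ℝ) < n := by exact_mod_cast hnpos
      -- division decomposition
      have hq2 : 2 ≤ n / m := (Nat.le_div_iff_mul_le hmpos).mpr (by omega)
      obtain ⟨k, hk⟩ := Nat.exists_eq_add_of_le hq2
      have hdm : m * (n / m) + n % m = n := Nat.div_add_mod n m
      set r' := n % m with hr'
      have hr'm : r' < m := Nat.mod_lt n hmpos
      have hidx : (m + r') + (k + 1) * m = n := by
        calc (m + r') + (k + 1) * m = m * (2 + k) + r' := by ring
          _ = n := by rw [← hk]; exact hdm
      have hkey := helper k m (m + r') hmn₀ (by omega)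
      rw [hidx] at hkey
      have hmr : a (m + r') + f (m + r') ≤ C := hCle r' hr'm
      have hkm : ((k : ℝ) + 1) * (a m + f m) ≤ ((k : ℝ) + 1) * ((m : ℝ) * x) :=
        mul_le_mul_of_nonneg_left hfm (by positivity)
      have han : a n ≤ C + ((k : ℝ) + 1) * ((m : ℝ) * x) := by linarith
      have hdiv : a n / n ≤ C / n + (((k : ℝ) + 1) * m / n) * x := by
        calc a n / n ≤ (C + ((k : ℝ) + 1) * ((m : ℝ) * x)) / n := by
              exact (div_le_div_iff_of_pos_right hnposR).mpr han
          _ = C / n + (((k : ℝ) + 1) * m / n) * x := by ring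
      set t : ℝ := ((k : ℝ) + 1) * m / n with ht
      have hkm_le : ((k : ℝ) + 1) * m ≤ n := by
        have : (k + 1) * m ≤ n := by omega
        exact_mod_cast this
      have ht1 : t ≤ 1 := (div_le_one hnposR).mpr hkm_le
      have h1t : 0 ≤ 1 - t := by linarith
      have h2t : 1 - t ≤ 2 * (m : ℝ) / n := by
        have hcast : ((m : ℝ) + r') + ((k : ℝ) + 1) * m = n := by exact_mod_cast hidx
        have hr'R : (r' : ℝ) < m := by exact_mod_cast hr'm
        rw [ht, sub_le_iff_le_add, ← add_div, le_div_iff₀ hnposR]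
        linarith
      have htx : t * x ≤ x + (2 * (m : ℝ) / n) * |x| := by
        have h3 : (1 - t) * (-x) ≤ (1 - t) * |x| :=
          mul_le_mul_of_nonneg_left (neg_le_abs x) h1t
        have h4 : (1 - t) * |x| ≤ (2 * (m : ℝ) / n) * |x| :=
          mul_le_mul_of_nonneg_right h2t (abs_nonneg x)
        have e2 : (1 - t) * (-x) = -((1 - t) * x) := by ring
        rw [e2] at h3
        have egoal : t * x = x - (1 - t) * x := by ring
        rw [egoal]
        clear_value t x L C S
        linarith [h3, h4]
      have hfin : (2 * (m : ℝ) / n) * |x| = (2 * (m : ℝ) * |x|) / n := by ring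
      rw [hfin] at htx
      have : a n / n ≤ C / n + x + (2 * (m : ℝ) * |x|) / n := by linarith
      have : a n / n < ε / 4 + x + ε / 4 := by linarith
      rw [hxdef] at this
      linarith
    obtain ⟨M, hM⟩ := eventually_atTop.mp (hlow.and hup)
    refine ⟨M, fun n hn => ?_⟩
    obtain ⟨h1, h2⟩ := hM n hn
    rw [Real.dist_eq, abs_lt]
    constructor <;> linarith
  refine ⟨L, ?_, htend⟩
  have : ∀ᶠ n : ℕ in atTop, 0 ≤ a n / n :=
    eventually_atTop.mpr ⟨1, fun n hn => div_nonneg (ha n hn) (Nat.cast_nonneg n)⟩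
  exact ge_of_tendsto htend this
end

section
/- Let (a_n)_{n≥1} be a sequence of real numbers and f : ℤ_{>0} → ℝ a function with lim_{n→∞} f(n)/n = 0. Suppose that: (1) there exists an integer n₀ > 0 such that for every integer l ≥ 2 and every tuple (n_1, …, n_l) of integers all ≥ n₀, one has a_{n_1 + ⋯ + n_l} ≥ a_{n_1} + ⋯ + a_{n_l} − f(n_1) − ⋯ − f(n_l); and (2) there exists a constant α > 0 such that a_n ≤ αn for all n ≥ 1. Then the sequence (a_n/n)_{n≥1} converges to a limit in ℝ. -/
open Filter

theorem stmt_10 (a : ℕ → ℝ)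
    (f : ℕ → ℝ) (hf : Tendsto (fun n : ℕ => f n / n) atTop (nhds 0))
    (h1 : ∃ n₀ : ℕ, 0 < n₀ ∧ ∀ l : ℕ, 2 ≤ l → ∀ ns : Fin l → ℕ,
      (∀ i, n₀ ≤ ns i) →
      ∑ i, a (ns i) - ∑ i, f (ns i) ≤ a (∑ i, ns i))
    (h2 : ∃ α : ℝ, 0 < α ∧ ∀ n : ℕ, 1 ≤ n → a n ≤ α * n) :
    ∃ L : ℝ, Tendsto (fun n : ℕ => a n / n) atTop (nhds L) := by
  obtain ⟨n₀, hn₀, hsup⟩ := h1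
  obtain ⟨α, hα, hbd⟩ := h2
  set g : ℕ → ℝ := fun m => (a m - f m) / m with hgdef
  -- Key: for each m ≥ n₀ and ε > 0, eventually a n / n ≥ g m - ε
  have key : ∀ m : ℕ, n₀ ≤ m → ∀ ε : ℝ, 0 < ε →
      ∀ᶠ n : ℕ in atTop, g m - ε ≤ a n / n := by
    intro m hm ε hε
    have hm1 : 1 ≤ m := le_trans hn₀ hm
    have hmpos : (0:ℝ) < m := by exact_mod_cast hm1
    set c : ℝ := g m with hc
    have hcm : c * m = a m - f m := by
      rw [hc, hgdef]
      field_simp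
    have hne : (Finset.Ico n₀ (n₀ + m)).Nonempty := by
      refine Finset.nonempty_Ico.2 (by omega)
    set B := (Finset.Ico n₀ (n₀ + m)).inf' hne (fun r => a r - f r) with hB
    set D : ℝ := ((n₀ : ℝ) + m) * |c| + |B| with hD
    have hD0 : 0 ≤ D := by positivity
    have est : ∀ n : ℕ, n₀ + m ≤ n → c * n - D ≤ a n := by
      intro n hn
      set q := (n - n₀) / m with hq'
      set s := (n - n₀) % m with hs'
      have hdm : m * q + s = n - n₀ := Nat.div_add_mod _ _
      have hsm : s < m := Nat.mod_lt _ (by omega)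
      have hq1 : 1 ≤ q := by
        rw [hq']
        exact (Nat.one_le_div_iff (by omega)).2 (by omega)
      set r := n₀ + s with hr
      have hnqr : n = r + q * m := by
        rw [Nat.mul_comm] at hdm
        rw [hr]
        generalize hqm : q * m = t at hdm ⊢
        omega
      -- apply superadditivity with q copies of m and one r
      have hcond : ∀ i : Fin (q+1), n₀ ≤ (Fin.cons r (fun _ => m) : Fin (q+1) → ℕ) i := by
        intro i
        refine Fin.cases ?_ ?_ i
        · simp [hr]
        · intro j; simp [hm]
      have happ := hsup (q+1) (by omega) (Fin.cons r (fun _ => m)) hcond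
      have hsum_ns : ∑ i : Fin (q+1), (Fin.cons r (fun _ => m) : Fin (q+1) → ℕ) i
          = r + q * m := by
        rw [Fin.sum_univ_succ]
        simp [mul_comm]
      have hsum_a : ∑ i : Fin (q+1), a ((Fin.cons r (fun _ => m) : Fin (q+1) → ℕ) i)
          = a r + q * a m := by
        rw [Fin.sum_univ_succ]
        simp [mul_comm]
      have hsum_f : ∑ i : Fin (q+1), f ((Fin.cons r (fun _ => m) : Fin (q+1) → ℕ) i)
          = f r + q * f m := by
        rw [Fin.sum_univ_succ]
        simp [mul_comm]
      rw [hsum_ns, hsum_a, hsum_f, ← hnqr] at happ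
      -- B ≤ a r - f r
      have hBr : B ≤ a r - f r := by
        refine Finset.inf'_le _ ?_
        simp [Finset.mem_Ico, hr]
        omega
      have hcast : (n : ℝ) = (r : ℝ) + (q : ℝ) * m := by exact_mod_cast hnqr
      have hrle : (r : ℝ) ≤ (n₀ : ℝ) + m := by
        have : r ≤ n₀ + m := by omega
        exact_mod_cast this
      have hcn : c * n = c * r + (q : ℝ) * (c * m) := by rw [hcast]; ring
      have h5 : (q : ℝ) * (c * m) = (q : ℝ) * a m - (q : ℝ) * f m := by
        rw [hcm]; ring
      have hcr1 : c * r ≤ |c| * r :=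
        mul_le_mul_of_nonneg_right (le_abs_self c) (by positivity)
      have hcr2 : |c| * r ≤ |c| * ((n₀ : ℝ) + m) :=
        mul_le_mul_of_nonneg_left hrle (abs_nonneg c)
      have hBabs : -|B| ≤ B := neg_abs_le B
      rw [hD]
      linarith
    -- conclude the eventual bound
    have hDto : Tendsto (fun n : ℕ => D / n) atTop (nhds 0) :=
      tendsto_const_div_atTop_nhds_zero_nat D
    have hev : ∀ᶠ n : ℕ in atTop, D / n < ε := hDto.eventually_lt_const hε
    filter_upwards [eventually_ge_atTop (n₀ + m), hev] with n hn hDn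
    have hnpos : (0:ℝ) < n := by
      have : 0 < n := by omega
      exact_mod_cast this
    have h := est n hn
    have hdiv : c - D / n ≤ a n / n := by
      have h2 : c - D / n = (c * n - D) / n := by field_simp
      rw [h2]
      gcongr
    calc g m - ε ≤ c - D / n := by rw [← hc]; linarith
    _ ≤ a n / n := hdiv
  -- g is bounded above by α on [n₀, ∞)
  have gle : ∀ m : ℕ, n₀ ≤ m → g m ≤ α := by
    intro m hm
    by_contra hcon
    push_neg at hcon
    have hε : 0 < (g m - α) / 2 := by linarith
    obtain ⟨n, hn1, hn2⟩ := ((key m hm _ hε).and (eventually_ge_atTop 1)).exists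
    have hnpos : (0:ℝ) < n := by exact_mod_cast hn2
    have hα' : a n / n ≤ α := by
      rw [div_le_iff₀ hnpos]
      exact hbd n hn2
    linarith
  -- the limit
  set S : Set ℝ := g '' {m : ℕ | n₀ ≤ m} with hS
  have Sne : S.Nonempty := ⟨g n₀, n₀, by simp, rfl⟩
  have Sbdd : BddAbove S := by
    refine ⟨α, ?_⟩
    rintro _ ⟨m, hm, rfl⟩
    exact gle m hm
  set L : ℝ := sSup S with hL
  have hLub : ∀ m : ℕ, n₀ ≤ m → g m ≤ L := fun m hm => le_csSup Sbdd ⟨m, hm, rfl⟩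
  refine ⟨L, ?_⟩
  rw [Metric.tendsto_atTop]
  intro ε hε
  have hup : ∀ᶠ n : ℕ in atTop, a n / n < L + ε := by
    have hf' : ∀ᶠ n : ℕ in atTop, f n / n < ε := hf.eventually_lt_const hε
    filter_upwards [hf', eventually_ge_atTop (max n₀ 1)] with n hfn hn
    have hn₀n : n₀ ≤ n := le_trans (le_max_left _ _) hn
    have hn1 : 1 ≤ n := le_trans (le_max_right _ _) hn
    have hnpos : (0:ℝ) < n := by exact_mod_cast hn1
    have hgn : a n / n = g n + f n / n := by
      rw [hgdef]; field_simp; ring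
    have := hLub n hn₀n
    linarith [hgn]
  obtain ⟨x, ⟨m, hm, rfl⟩, hx⟩ := exists_lt_of_lt_csSup Sne (sub_lt_self L (half_pos hε))
  have hlow := key m hm (ε/2) (half_pos hε)
  have hcomb : ∀ᶠ n : ℕ in atTop, dist (a n / n) L < ε := by
    filter_upwards [hup, hlow] with n hu hl
    rw [Real.dist_eq, abs_sub_lt_iff]
    constructor <;> linarith
  exact eventually_atTop.1 hcomb
end

section
/- Let (f_n)_{n≥1} be a sequence of right-continuous decreasing functions ℝ → [0,1] such that: (i) sup_{n≥1} inf{x : f_n(x) = 0} < +∞ and inf_{n≥1} sup{x : f_n(x) = 1} > −∞; (ii) there exists a countable set Z ⊂ ℝ such that (f_n(x))_{n≥1} converges for every x ∈ ℝ \ Z. Let f : ℝ → [0,1] be a right-continuous function with f(x) = lim_n f_n(x) for all x ∈ ℝ \ Z. Then: (1) f is decreasing; (2) writing A = liminf_n inf{x : f_n(x) = 0} and B = limsup_n sup{x : f_n(x) = 1}, one has f ≡ 0 on (A, +∞) and f ≡ 1 on (−∞, B); (3) there exists a countable subset Z' of (0,1) such that (f_n*(t))_{n≥1} converges to f*(t)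 for every t ∈ (0,1) \ Z'; (4) the sequence of functions t ↦ ∫_0^t f_n*(s) ds converges uniformly on [0,1] to t ↦ ∫_0^t f*(s) ds. -/
open Filter

open Set MeasureTheory in
private lemma exists_Ioo_notMem {Z : Set ℝ} (hZ : Z.Countable) {a b : ℝ} (hab : a < b) :
    ∃ x, x ∈ Set.Ioo a b ∧ x ∉ Z := by
  by_contra h
  push_neg at h
  have h0 : (volume : Measure ℝ) (Set.Ioo a b) = 0 :=
    measure_mono_null (fun x hx => h x hx) (hZ.measure_zero _)
  rw [Real.volume_Ioo] at h0
  rw [ENNReal.ofReal_eq_zero] at h0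
  linarith

example : True := trivial

/-- The quasi-inverse of a right-continuous decreasing function `f : ℝ → [0,1]`:
`f*(t) = sup {x ∈ ℝ : f x > t}`. -/
noncomputable def quasiInverse (f : ℝ → ℝ) (t : ℝ) : ℝ :=
  sSup {x : ℝ | t < f x}

section QI

open Set MeasureTheory

variable {h : ℝ → ℝ} {U L : ℝ}

private lemma qI_bddAbove (h0 : ∀ x, U < x → h x = 0) {t : ℝ} (ht : 0 < t) :
    BddAbove {x : ℝ | t < h x} := by
  refine ⟨U, fun x hx => ?_⟩
  by_contra hc
  push_neg at hc
  rw [Set.mem_setOf_eq, h0 x hc] at hx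
  exact absurd hx (not_lt.2 ht.le)

private lemma qI_le_U (h0 : ∀ x, U < x → h x = 0) {t : ℝ} (ht : 0 < t) {x : ℝ}
    (hx : x ∈ {x : ℝ | t < h x}) : x ≤ U := by
  by_contra hc
  push_neg at hc
  rw [Set.mem_setOf_eq, h0 x hc] at hx
  exact absurd hx (not_lt.2 ht.le)

private lemma qI_mem (h1 : ∀ x, x < L → h x = 1) {t : ℝ} (ht : t < 1) :
    (L - 1) ∈ {x : ℝ | t < h x} := by
  have : h (L - 1) = 1 := h1 _ (by linarith)
  show t < h (L - 1)
  rw [this]; exact ht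

private lemma qI_mem_Icc (h0 : ∀ x, U < x → h x = 0) (h1 : ∀ x, x < L → h x = 1)
    {t : ℝ} (ht : t ∈ Set.Ioo (0 : ℝ) 1) :
    quasiInverse h t ∈ Set.Icc (L - 1) U :=
  ⟨le_csSup (qI_bddAbove h0 ht.1) (qI_mem h1 ht.2),
   csSup_le ⟨L - 1, qI_mem h1 ht.2⟩ (fun _ hx => qI_le_U h0 ht.1 hx)⟩

private lemma qI_antitoneOn (h0 : ∀ x, U < x → h x = 0) (h1 : ∀ x, x < L → h x = 1) :
    AntitoneOn (quasiInverse h) (Set.Ioo (0 : ℝ) 1) := by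
  intro s hs t ht hst
  exact csSup_le_csSup (qI_bddAbove h0 hs.1) ⟨L - 1, qI_mem h1 ht.2⟩
    (fun x hx => hst.trans_lt hx)

private lemma qI_abs_le (hb : ∀ x, h x ∈ Set.Icc (0 : ℝ) 1)
    (h0 : ∀ x, U < x → h x = 0) (h1 : ∀ x, x < L → h x = 1)
    {t : ℝ} (ht : t ∈ Set.Ioc (0 : ℝ) 1) :
    |quasiInverse h t| ≤ max |L - 1| |U| := by
  rcases eq_or_lt_of_le ht.2 with h1t | h1t
  · have hemp : {x : ℝ | t < h x} = ∅ := by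
      ext x
      simp only [Set.mem_setOf_eq, Set.mem_empty_iff_false, iff_false, not_lt]
      exact (hb x).2.trans h1t.ge
    rw [quasiInverse, hemp, Real.sSup_empty, abs_zero]
    exact le_max_of_le_left (abs_nonneg _)
  · have hm := qI_mem_Icc h0 h1 ⟨ht.1, h1t⟩
    have h1' := hm.1
    have h2' := hm.2
    have := le_abs_self U
    have := neg_abs_le (L - 1)
    have := le_max_left |L - 1| |U|
    have := le_max_right |L - 1| |U|
    rw [abs_le]
    constructor <;> linarith

private lemma qI_ae_bound (hb : ∀ x, h x ∈ Set.Icc (0 : ℝ) 1)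
    (h0 : ∀ x, U < x → h x = 0) (h1 : ∀ x, x < L → h x = 1)
    {t : ℝ} (ht : t ∈ Set.Icc (0 : ℝ) 1) :
    ∀ᵐ x ∂(volume.restrict (Set.Ioc 0 t)), ‖quasiInverse h x‖ ≤ max |L - 1| |U| := by
  refine (ae_restrict_iff' measurableSet_Ioc).2 (Filter.Eventually.of_forall fun x hx => ?_)
  rw [Real.norm_eq_abs]
  exact qI_abs_le hb h0 h1 ⟨hx.1, hx.2.trans ht.2⟩

private lemma qI_aesm (h0 : ∀ x, U < x → h x = 0) (h1 : ∀ x, x < L → h x = 1)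
    {t : ℝ} (ht : t ∈ Set.Icc (0 : ℝ) 1) :
    AEStronglyMeasurable (quasiInverse h) (volume.restrict (Set.Ioc 0 t)) := by
  rw [← Measure.restrict_congr_set Ioo_ae_eq_Ioc]
  exact (aemeasurable_restrict_of_antitoneOn measurableSet_Ioo
    ((qI_antitoneOn h0 h1).mono (Set.Ioo_subset_Ioo le_rfl ht.2))).aestronglyMeasurable

private lemma qI_integrable (hb : ∀ x, h x ∈ Set.Icc (0 : ℝ) 1)
    (h0 : ∀ x, U < x → h x = 0) (h1 : ∀ x, x < L → h x = 1)
    {t : ℝ} (ht : t ∈ Set.Icc (0 : ℝ) 1) :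
    IntervalIntegrable (quasiInverse h) volume 0 t := by
  rw [intervalIntegrable_iff_integrableOn_Ioc_of_le ht.1]
  exact ⟨qI_aesm h0 h1 ht,
    HasFiniteIntegral.restrict_of_bounded _ measure_Ioc_lt_top (qI_ae_bound hb h0 h1 ht)⟩

end QI
open MeasureTheory in
set_option maxHeartbeats 1600000 in
theorem stmt_18 (f : ℕ → ℝ → ℝ) (flim : ℝ → ℝ)
    -- the `f n` are right-continuous decreasing functions valued in `[0,1]`
    (hval : ∀ n x, f n x ∈ Set.Icc (0 : ℝ) 1)
    (hanti : ∀ n, Antitone (f n))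
    (hrc : ∀ n (x : ℝ), ContinuousWithinAt (f n) (Set.Ici x) x)
    -- (i) `sup_n inf {x : f n x = 0} < +∞` and `inf_n sup {x : f n x = 1} > -∞`
    (hU : ∃ U : ℝ, ∀ n, ∃ x : ℝ, x ≤ U ∧ f n x = 0)
    (hL : ∃ L : ℝ, ∀ n, ∃ x : ℝ, L ≤ x ∧ f n x = 1)
    -- (ii) convergence outside a countable set `Z`, with limit `flim`
    (Z : Set ℝ) (hZ : Z.Countable)
    (hconv : ∀ x : ℝ, x ∉ Z → Tendsto (fun n => f n x) atTop (nhds (flim x)))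
    -- `flim : ℝ → [0,1]` is right continuous
    (hlval : ∀ x, flim x ∈ Set.Icc (0 : ℝ) 1)
    (hlrc : ∀ x : ℝ, ContinuousWithinAt flim (Set.Ici x) x) :
    -- (1) `flim` is decreasing
    Antitone flim ∧
    -- (2) `flim ≡ 0` on `(A, +∞)` and `flim ≡ 1` on `(-∞, B)`
    ((∀ x : ℝ,
        liminf (fun n => sInf ((fun y : ℝ => (y : EReal)) '' {y : ℝ | f n y = 0})) atTop
          < (x : EReal) → flim x = 0) ∧
     (∀ x : ℝ,
        (x : EReal)
          < limsup (fun n => sSup ((fun y : ℝ => (y : EReal)) '' {y : ℝ | f n y = 1})) atTop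
          → flim x = 1)) ∧
    -- (3) convergence of the quasi-inverses outside a countable subset of `(0,1)`
    (∃ Z' : Set ℝ, Z' ⊆ Set.Ioo 0 1 ∧ Z'.Countable ∧
      ∀ t ∈ Set.Ioo (0 : ℝ) 1 \ Z',
        Tendsto (fun n => quasiInverse (f n) t) atTop (nhds (quasiInverse flim t))) ∧
    -- (4) uniform convergence of the primitives of the quasi-inverses on `[0,1]`
    TendstoUniformlyOn (fun n t => ∫ s in (0 : ℝ)..t, quasiInverse (f n) s)
      (fun t => ∫ s in (0 : ℝ)..t, quasiInverse flim s) atTop (Set.Icc 0 1) := by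
  obtain ⟨U, hU⟩ := hU
  obtain ⟨L, hL⟩ := hL
  -- basic vanishing facts for the `f n`
  have hf0 : ∀ n x, U < x → f n x = 0 := by
    intro n x hx
    obtain ⟨x0, hx0U, hx00⟩ := hU n
    have h1 := hanti n (le_of_lt (lt_of_le_of_lt hx0U hx))
    have h2 := (hval n x).1
    rw [hx00] at h1
    linarith
  have hf1 : ∀ n x, x < L → f n x = 1 := by
    intro n x hx
    obtain ⟨x1, hx1L, hx11⟩ := hL n
    have h1 := hanti n (le_of_lt (lt_of_lt_of_le hx hx1L))
    have h2 := (hval n x).2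
    rw [hx11] at h1
    linarith
  have hLU : L - 1 < U := by
    obtain ⟨x0, hx0U, hx00⟩ := hU 0
    obtain ⟨x1, hx1L, hx11⟩ := hL 0
    have hx10 : x1 < x0 := by
      by_contra hc
      push_neg at hc
      have := hanti 0 hc
      rw [hx00, hx11] at this
      linarith
    linarith
  -- antitone on the complement of Z
  have hmonoZ : ∀ x y : ℝ, x ∉ Z → y ∉ Z → x ≤ y → flim y ≤ flim x := by
    intro x y hx hy hxy
    exact le_of_tendsto_of_tendsto' (hconv y hy) (hconv x hx) (fun n => hanti n hxy)
  have haux : ∀ k : ℕ, (0:ℝ) < 1 / (k + 1) := by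
    intro k
    positivity
  have hseq : ∀ x : ℝ, ∃ u : ℕ → ℝ, (∀ k : ℕ, u k ∈ Set.Ioo x (x + 1 / ((k:ℝ) + 1)) ∧ u k ∉ Z) ∧
      Tendsto u atTop (nhds x) := by
    intro x
    have : ∀ k : ℕ, ∃ u, u ∈ Set.Ioo x (x + 1 / (k + 1)) ∧ u ∉ Z := by
      intro k
      exact exists_Ioo_notMem hZ (by linarith [haux k])
    choose u hu using this
    refine ⟨u, hu, ?_⟩
    have h1 : Tendsto (fun k : ℕ => x + 1 / ((k : ℝ) + 1)) atTop (nhds x) := by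
      have := tendsto_one_div_add_atTop_nhds_zero_nat (𝕜 := ℝ)
      have h2 := this.const_add x
      simpa using h2
    refine tendsto_of_tendsto_of_tendsto_of_le_of_le tendsto_const_nhds h1
      (fun k => (hu k).1.1.le) (fun k => (hu k).1.2.le)
  -- (1) flim is antitone
  have h1 : Antitone flim := by
    intro x y hxy
    obtain ⟨u, hu, hux⟩ := hseq x
    -- v k ∈ (max y (u k), y + 1/(k+1)) \ Z
    have hv' : ∀ k : ℕ, ∃ v, v ∈ Set.Ioo (max y (u k)) (y + 1 / (k + 1)) ∧ v ∉ Z := by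
      intro k
      refine exists_Ioo_notMem hZ (max_lt (by linarith [haux k]) ?_)
      have := (hu k).1.2
      linarith
    choose v hv using hv'
    have hvy : Tendsto v atTop (nhds y) := by
      have h1' : Tendsto (fun k : ℕ => y + 1 / ((k : ℝ) + 1)) atTop (nhds y) := by
        have h2 := tendsto_one_div_add_atTop_nhds_zero_nat.const_add y
        simpa using h2
      refine tendsto_of_tendsto_of_tendsto_of_le_of_le tendsto_const_nhds h1'
        (fun k => le_trans (le_max_left _ _) (hv k).1.1.le) (fun k => (hv k).1.2.le)
    have hfu : Tendsto (fun k => flim (u k)) atTop (nhds (flim x)) := by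
      refine (hlrc x).tendsto.comp ?_
      refine tendsto_nhdsWithin_of_tendsto_nhds_of_eventually_within _ hux ?_
      exact Filter.Eventually.of_forall fun k => (hu k).1.1.le
    have hfv : Tendsto (fun k => flim (v k)) atTop (nhds (flim y)) := by
      refine (hlrc y).tendsto.comp ?_
      refine tendsto_nhdsWithin_of_tendsto_nhds_of_eventually_within _ hvy ?_
      exact Filter.Eventually.of_forall fun k => le_trans (le_max_left _ _) (hv k).1.1.le
    refine le_of_tendsto_of_tendsto' hfv hfu (fun k => ?_)
    exact hmonoZ _ _ (hu k).2 (hv k).2 (le_trans (le_max_right _ _) (hv k).1.1.le)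
  -- flim vanishing facts
  have hl0 : ∀ x : ℝ, U < x → flim x = 0 := by
    intro x hx
    obtain ⟨x', hx', hx'Z⟩ := exists_Ioo_notMem hZ hx
    have h0 : flim x' = 0 := by
      have : Tendsto (fun n => f n x') atTop (nhds (flim x')) := hconv x' hx'Z
      have h2 : Tendsto (fun n => f n x') atTop (nhds 0) := by
        have : (fun n => f n x') = fun _ => (0:ℝ) := funext fun n => hf0 n x' hx'.1
        rw [this]
        exact tendsto_const_nhds
      exact tendsto_nhds_unique this h2
    have h2 := h1 hx'.2.le
    rw [h0] at h2
    exact le_antisymm h2 (hlval x).1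
  have hl1 : ∀ x : ℝ, x < L → flim x = 1 := by
    intro x hx
    obtain ⟨x', hx', hx'Z⟩ := exists_Ioo_notMem hZ hx
    have h0 : flim x' = 1 := by
      have hc : Tendsto (fun n => f n x') atTop (nhds (flim x')) := hconv x' hx'Z
      have h2 : Tendsto (fun n => f n x') atTop (nhds 1) := by
        have : (fun n => f n x') = fun _ => (1:ℝ) := funext fun n => hf1 n x' hx'.2
        rw [this]
        exact tendsto_const_nhds
      exact tendsto_nhds_unique hc h2
    have h3 := h1 hx'.1.le
    rw [h0] at h3
    linarith [(hlval x).2]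
  -- (2a)
  have h2a : ∀ x : ℝ,
      liminf (fun n => sInf ((fun y : ℝ => (y : EReal)) '' {y : ℝ | f n y = 0})) atTop
        < (x : EReal) → flim x = 0 := by
    intro x hx
    obtain ⟨c, hc1, hc2⟩ := EReal.exists_between_coe_real hx
    rw [EReal.coe_lt_coe_iff] at hc2
    obtain ⟨x', hx'mem, hx'Z⟩ := exists_Ioo_notMem hZ hc2
    have hfreq : ∃ᶠ n in atTop,
        sInf ((fun y : ℝ => (y : EReal)) '' {y : ℝ | f n y = 0}) < (c : EReal) :=
      frequently_lt_of_liminf_lt (h := hc1)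
    have hev : ∃ᶠ n in atTop, f n x' = 0 := by
      refine hfreq.mono fun n hn => ?_
      rw [sInf_lt_iff] at hn
      obtain ⟨_, ⟨y, hy, rfl⟩, hyc⟩ := hn
      rw [EReal.coe_lt_coe_iff] at hyc
      have hle := hanti n (le_of_lt (hyc.trans hx'mem.1))
      rw [Set.mem_setOf_eq] at hy
      rw [hy] at hle
      exact le_antisymm hle (hval n x').1
    have hx'0 : flim x' = 0 :=
      tendsto_nhds_unique_of_frequently_eq (hconv x' hx'Z) tendsto_const_nhds hev
    have h2 := h1 hx'mem.2.le
    rw [hx'0] at h2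
    exact le_antisymm h2 (hlval x).1
  -- (2b)
  have h2b : ∀ x : ℝ,
      (x : EReal)
        < limsup (fun n => sSup ((fun y : ℝ => (y : EReal)) '' {y : ℝ | f n y = 1})) atTop
        → flim x = 1 := by
    intro x hx
    obtain ⟨c, hc1, hc2⟩ := EReal.exists_between_coe_real hx
    rw [EReal.coe_lt_coe_iff] at hc1
    obtain ⟨x', hx'mem, hx'Z⟩ := exists_Ioo_notMem hZ hc1
    have hfreq : ∃ᶠ n in atTop,
        (c : EReal) < sSup ((fun y : ℝ => (y : EReal)) '' {y : ℝ | f n y = 1}) :=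
      frequently_lt_of_lt_limsup (h := hc2)
    have hev : ∃ᶠ n in atTop, f n x' = 1 := by
      refine hfreq.mono fun n hn => ?_
      rw [lt_sSup_iff] at hn
      obtain ⟨_, ⟨y, hy, rfl⟩, hyc⟩ := hn
      rw [EReal.coe_lt_coe_iff] at hyc
      have hle := hanti n (le_of_lt (hx'mem.2.trans hyc))
      rw [Set.mem_setOf_eq] at hy
      rw [hy] at hle
      exact le_antisymm (hval n x').2 hle
    have hx'1 : flim x' = 1 :=
      tendsto_nhds_unique_of_frequently_eq (hconv x' hx'Z) tendsto_const_nhds hev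
    have h2 := h1 hx'mem.1.le
    rw [hx'1] at h2
    exact le_antisymm (hlval x).2 h2
  -- quasi-inverse setup
  set g := quasiInverse flim with hgdef
  have hgmem : ∀ t ∈ Set.Ioo (0:ℝ) 1, g t ∈ Set.Icc (L - 1) U := fun t ht =>
    qI_mem_Icc hl0 hl1 ht
  have hganti : AntitoneOn g (Set.Ioo (0:ℝ) 1) := qI_antitoneOn hl0 hl1
  -- extension of g to an antitone function on ℝ
  set G : ℝ → ℝ := fun t => if t < 1 then (if 0 < t then g t else U) else L - 1 with hGdef
  have hGeq : ∀ t ∈ Set.Ioo (0:ℝ) 1, G t = g t := by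
    intro t ht
    simp only [hGdef, if_pos ht.2, if_pos ht.1]
  have hGanti : Antitone G := by
    intro s t hst
    simp only [hGdef]
    by_cases ht1 : t < 1
    · by_cases ht0 : 0 < t
      · have hs1 : s < 1 := lt_of_le_of_lt hst ht1
        rw [if_pos ht1, if_pos ht0, if_pos hs1]
        by_cases hs0 : 0 < s
        · rw [if_pos hs0]
          exact hganti ⟨hs0, hs1⟩ ⟨ht0, ht1⟩ hst
        · rw [if_neg hs0]
          exact (hgmem t ⟨ht0, ht1⟩).2
      · have hs1 : s < 1 := lt_of_le_of_lt hst ht1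
        have hs0 : ¬ (0 < s) := fun hc => ht0 (lt_of_lt_of_le hc hst)
        rw [if_pos ht1, if_neg ht0, if_pos hs1, if_neg hs0]
    · rw [if_neg ht1]
      by_cases hs1 : s < 1
      · rw [if_pos hs1]
        by_cases hs0 : 0 < s
        · rw [if_pos hs0]
          exact (hgmem s ⟨hs0, hs1⟩).1
        · rw [if_neg hs0]
          linarith
      · rw [if_neg hs1]
  have hGcount : {t : ℝ | ¬ContinuousAt G t}.Countable := hGanti.countable_not_continuousAt
  -- the exceptional set for (3)
  set Z' : Set ℝ := {t | t ∈ Set.Ioo (0:ℝ) 1 ∧ ¬ContinuousAt G t} with hZ'def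
  have hZ'sub : Z' ⊆ Set.Ioo 0 1 := fun t ht => ht.1
  have hZ'count : Z'.Countable := hGcount.mono fun t ht => ht.2
  -- (3) the key convergence statement
  have h3 : ∀ t ∈ Set.Ioo (0:ℝ) 1 \ Z',
      Tendsto (fun n => quasiInverse (f n) t) atTop (nhds (g t)) := by
    rintro t ⟨htI, htZ'⟩
    have hcont : ContinuousAt G t := by
      by_contra hc
      exact htZ' ⟨htI, hc⟩
    refine Metric.tendsto_nhds.2 fun ε hε => ?_
    -- lower bound, eventually g t - ε < quasiInverse (f n) t
    have hlow : ∀ᶠ n in atTop, g t - ε < quasiInverse (f n) t := by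
      obtain ⟨y, hy, hyg⟩ : ∃ y ∈ {x : ℝ | t < flim x}, g t - ε < y :=
        exists_lt_of_lt_csSup ⟨L - 1, qI_mem hl1 htI.2⟩ (show g t - ε < g t by linarith)
      obtain ⟨x', hx'mem, hx'Z⟩ := exists_Ioo_notMem hZ hyg
      have hflimx' : t < flim x' := lt_of_lt_of_le hy (h1 hx'mem.2.le)
      have hev : ∀ᶠ n in atTop, t < f n x' := (hconv x' hx'Z) (Ioi_mem_nhds hflimx')
      refine hev.mono fun n hn => ?_
      have := le_csSup (qI_bddAbove (hf0 n) htI.1) (show x' ∈ {x : ℝ | t < f n x} from hn)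
      calc g t - ε < x' := hx'mem.1
        _ ≤ quasiInverse (f n) t := this
    -- upper bound, eventually quasiInverse (f n) t < g t + ε
    have hupp : ∀ᶠ n in atTop, quasiInverse (f n) t < g t + ε := by
      -- find t'' < t with g t'' < g t + ε using left continuity of G at t
      have htt : Tendsto G (nhdsWithin t (Set.Iio t)) (nhds (G t)) :=
        (hcont.continuousWithinAt).tendsto
      have hGt : G t = g t := hGeq t htI
      have hev1 : ∀ᶠ s in nhdsWithin t (Set.Iio t), G s < g t + ε :=
        htt (Iio_mem_nhds (by rw [hGt]; linarith))
      have hev2 : ∀ᶠ s in nhdsWithin t (Set.Iio t), s ∈ Set.Ioo 0 t :=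
        Ioo_mem_nhdsLT_of_mem ⟨htI.1, le_refl t⟩
      obtain ⟨t'', ht''1, ht''2⟩ := (hev1.and hev2).exists
      have ht''I : t'' ∈ Set.Ioo (0:ℝ) 1 := ⟨ht''2.1, ht''2.2.trans htI.2⟩
      rw [hGeq t'' ht''I] at ht''1
      obtain ⟨x', hx'mem, hx'Z⟩ := exists_Ioo_notMem hZ ht''1
      have hflimx' : flim x' ≤ t'' := by
        by_contra hc
        push_neg at hc
        have := le_csSup (qI_bddAbove hl0 ht''I.1) (show x' ∈ {x : ℝ | t'' < flim x} from hc)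
        exact absurd hx'mem.1 (not_lt.2 this)
      have hev : ∀ᶠ n in atTop, f n x' < t :=
        (hconv x' hx'Z) (Iio_mem_nhds (lt_of_le_of_lt hflimx' ht''2.2))
      refine hev.mono fun n hn => ?_
      have hle : quasiInverse (f n) t ≤ x' := by
        refine csSup_le ⟨L - 1, qI_mem (hf1 n) htI.2⟩ fun y hy => ?_
        by_contra hc
        push_neg at hc
        have := hanti n hc.le
        rw [Set.mem_setOf_eq] at hy
        linarith
      exact lt_of_le_of_lt hle hx'mem.2
    filter_upwards [hlow, hupp] with n hn1 hn2
    rw [Real.dist_eq, abs_sub_lt_iff]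
    constructor <;> linarith
  -- (4)
  set M : ℝ := max |L - 1| |U| with hMdef
  have hM0 : 0 ≤ M := le_trans (abs_nonneg _) (le_max_left _ _)
  have hint : ∀ n, ∀ t ∈ Set.Icc (0:ℝ) 1, IntervalIntegrable (quasiInverse (f n)) volume 0 t :=
    fun n t ht => qI_integrable (hval n) (hf0 n) (hf1 n) ht
  have hintl : ∀ t ∈ Set.Icc (0:ℝ) 1, IntervalIntegrable g volume 0 t :=
    fun t ht => qI_integrable hlval hl0 hl1 ht
  have hptwise : ∀ t ∈ Set.Icc (0:ℝ) 1,
      Tendsto (fun n => ∫ s in (0:ℝ)..t, quasiInverse (f n) s) atTop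
        (nhds (∫ s in (0:ℝ)..t, g s)) := by
    intro t ht
    have he : ∀ h' : ℝ → ℝ, (∫ s in (0:ℝ)..t, h' s) = ∫ s in Set.Ioc (0:ℝ) t, h' s :=
      fun h' => intervalIntegral.integral_of_le ht.1
    simp only [he]
    refine MeasureTheory.tendsto_integral_of_dominated_convergence (fun _ => M)
      (fun n => qI_aesm (hf0 n) (hf1 n) ht) ?_
      (fun n => qI_ae_bound (hval n) (hf0 n) (hf1 n) ht) ?_
    · exact MeasureTheory.integrableOn_const measure_Ioc_lt_top.ne
    · have hnull : (volume : MeasureTheory.Measure ℝ) (Z' ∪ {1}) = 0 :=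
        MeasureTheory.measure_union_null (hZ'count.measure_zero _)
          (MeasureTheory.measure_singleton 1)
      have hae : ∀ᵐ s : ℝ ∂volume, s ∉ Z' ∪ {1} :=
        (MeasureTheory.measure_eq_zero_iff_ae_notMem).1 hnull
      filter_upwards [MeasureTheory.ae_restrict_of_ae hae,
        MeasureTheory.ae_restrict_mem measurableSet_Ioc] with s hs1 hs2
      have hsI : s ∈ Set.Ioo (0:ℝ) 1 :=
        ⟨hs2.1, lt_of_le_of_ne (hs2.2.trans ht.2) fun hc => hs1 (Or.inr hc)⟩
      exact h3 s ⟨hsI, fun hc => hs1 (Or.inl hc)⟩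
  have h4 : TendstoUniformlyOn (fun n t => ∫ s in (0:ℝ)..t, quasiInverse (f n) s)
      (fun t => ∫ s in (0:ℝ)..t, g s) atTop (Set.Icc 0 1) := by
    rw [Metric.tendstoUniformlyOn_iff]
    intro ε hε
    set δ : ℝ := ε / (4 * (M + 1)) with hδdef
    have hδ0 : 0 < δ := by positivity
    have hδM : δ * (M + 1) = ε / 4 := by
      rw [hδdef]
      field_simp
    have hMδ : M * δ ≤ ε / 4 := by nlinarith
    set N : ℕ := ⌈1 / δ⌉₊ with hNdef
    have hNet : ∀ t ∈ Set.Icc (0:ℝ) 1, ∃ i : ℕ, i < N + 1 ∧ (i:ℝ) * δ ∈ Set.Icc (0:ℝ) 1 ∧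
        (i:ℝ) * δ ≤ t ∧ t - (i:ℝ) * δ ≤ δ := by
      intro t ht
      have hple : (⌊t / δ⌋₊ : ℝ) * δ ≤ t := by
        rw [← le_div_iff₀ hδ0]
        exact Nat.floor_le (div_nonneg ht.1 hδ0.le)
      refine ⟨⌊t / δ⌋₊, ?_, ⟨by positivity, hple.trans ht.2⟩, hple, ?_⟩
      · have hdd : t / δ ≤ 1 / δ := by gcongr; exact ht.2
        have := (Nat.floor_mono hdd).trans (Nat.floor_le_ceil _)
        omega
      · have := Nat.lt_floor_add_one (t / δ)
        have h2 : t < ((⌊t / δ⌋₊ : ℝ) + 1) * δ := by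
          rw [← div_lt_iff₀ hδ0]
          exact_mod_cast this
        nlinarith
    have hkey : ∀ᶠ n in atTop, ∀ i ∈ Finset.range (N + 1),
        dist (∫ s in (0:ℝ)..(min ((i:ℝ) * δ) 1), quasiInverse (f n) s)
          (∫ s in (0:ℝ)..(min ((i:ℝ) * δ) 1), g s) < ε / 3 := by
      rw [Filter.eventually_all_finset]
      intro i _
      have hp : min ((i:ℝ) * δ) 1 ∈ Set.Icc (0:ℝ) 1 :=
        ⟨le_min (by positivity) zero_le_one, min_le_right _ _⟩
      exact (Metric.tendsto_nhds.1 (hptwise _ hp)) (ε / 3) (by linarith)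
    filter_upwards [hkey] with n hn t ht
    obtain ⟨i, hiN, hpmem, hple, hpclose⟩ := hNet t ht
    have hpmin : min ((i:ℝ) * δ) 1 = (i:ℝ) * δ := min_eq_left hpmem.2
    set p : ℝ := (i:ℝ) * δ with hpdef
    have hsub : Set.uIcc p t ⊆ Set.uIcc 0 t := by
      rw [Set.uIcc_of_le ht.1]
      exact Set.uIcc_subset_Icc ⟨hpmem.1, hple⟩ ⟨ht.1, le_refl t⟩
    have hsplit : ∀ h' : ℝ → ℝ, IntervalIntegrable h' volume 0 t →
        IntervalIntegrable h' volume 0 p →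
        (∫ s in (0:ℝ)..t, h' s) - (∫ s in (0:ℝ)..p, h' s) = ∫ s in p..t, h' s := by
      intro h' h1' h2'
      have h3' : IntervalIntegrable h' volume p t := h1'.mono_set hsub
      rw [← intervalIntegral.integral_add_adjacent_intervals h2' h3']
      ring
    have hbound : ∀ h' : ℝ → ℝ, (∀ x, h' x ∈ Set.Icc (0:ℝ) 1) → (∀ x, U < x → h' x = 0) →
        (∀ x, x < L → h' x = 1) → ‖∫ s in p..t, quasiInverse h' s‖ ≤ ε / 4 := by
      intro h' hb' h0' h1'
      have := intervalIntegral.norm_integral_le_of_norm_le_const (C := M) (a := p) (b := t)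
        (f := quasiInverse h') ?_
      · have habs : |t - p| ≤ δ := by
          rw [abs_of_nonneg (by linarith)]
          exact hpclose
        calc ‖∫ s in p..t, quasiInverse h' s‖ ≤ M * |t - p| := this
          _ ≤ M * δ := mul_le_mul_of_nonneg_left habs hM0
          _ ≤ ε / 4 := hMδ
      · intro x hx
        rw [Set.uIoc_of_le hple] at hx
        rw [Real.norm_eq_abs]
        exact qI_abs_le hb' h0' h1' ⟨lt_of_le_of_lt hpmem.1 hx.1, hx.2.trans ht.2⟩
    show dist (∫ s in (0:ℝ)..t, g s) (∫ s in (0:ℝ)..t, quasiInverse (f n) s) < ε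
    have htri := dist_triangle4 (∫ s in (0:ℝ)..t, g s) (∫ s in (0:ℝ)..p, g s)
      (∫ s in (0:ℝ)..p, quasiInverse (f n) s) (∫ s in (0:ℝ)..t, quasiInverse (f n) s)
    have hd1 : dist (∫ s in (0:ℝ)..t, g s) (∫ s in (0:ℝ)..p, g s) ≤ ε / 4 := by
      rw [dist_eq_norm, hsplit g (hintl t ht) (hintl p hpmem)]
      exact hbound flim hlval hl0 hl1
    have hd2 : dist (∫ s in (0:ℝ)..p, g s) (∫ s in (0:ℝ)..p, quasiInverse (f n) s) < ε / 3 := by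
      rw [dist_comm]
      have := hn i (Finset.mem_range.2 hiN)
      rwa [hpmin] at this
    have hd3 : dist (∫ s in (0:ℝ)..p, quasiInverse (f n) s)
        (∫ s in (0:ℝ)..t, quasiInverse (f n) s) ≤ ε / 4 := by
      rw [dist_comm, dist_eq_norm, hsplit _ (hint n t ht) (hint n p hpmem)]
      exact hbound (f n) (hval n) (hf0 n) (hf1 n)
    linarith
  exact ⟨h1, ⟨h2a, h2b⟩, ⟨Z', hZ'sub, hZ'count, h3⟩, h4⟩
end

section
/- Let (b_n)_{n≥1} be a sequence of nonnegative real numbers and f : ℤ_{>0} → ℝ_{≥0} an increasing function such that Σ_{α≥1} f(2^α)/2^α < +∞. If there exists an integer n₀ > 0 such that b_{n+m} ≤ b_n + b_m + f(n) + f(m) for every pair (m, n) of integers both ≥ n₀, then the sequence (b_n/n)_{n≥1} converges to a limit in ℝ_{≥0}. -/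
open Filter Topology

/-- Binary splitting lemma: iterating approximate subadditivity along a balanced
binary tree. -/
lemma aux19_split (b f : ℕ → ℝ) (n₀ : ℕ) (hn₀ : 0 < n₀)
    (hf0 : ∀ n : ℕ, 1 ≤ n → 0 ≤ f n)
    (hfmono : ∀ m n : ℕ, 1 ≤ m → m ≤ n → f m ≤ f n)
    (hsub : ∀ m n : ℕ, n₀ ≤ m → n₀ ≤ n → b (n + m) ≤ b n + b m + f n + f m)
    (n : ℕ) (hn : n₀ ≤ n) :
    ∀ j q : ℕ, 1 ≤ q → q ≤ 2 ^ j →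
      b (q * n) ≤ (q : ℝ) * b n +
        2 * 2 ^ j * ∑ β ∈ Finset.range j, f (2 ^ (β + 1) * n) / 2 ^ (β + 1) := by
  have hn1 : 1 ≤ n := by omega
  have hFnn : ∀ j : ℕ, 0 ≤ ∑ β ∈ Finset.range j, f (2 ^ (β + 1) * n) / 2 ^ (β + 1) := by
    intro j
    refine Finset.sum_nonneg fun β _ => div_nonneg (hf0 _ ?_) (by positivity)
    have : 0 < 2 ^ (β + 1) * n := Nat.mul_pos (pow_pos (by norm_num) _) (by omega)
    omega
  intro j
  induction j with
  | zero =>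
    intro q hq1 hq2
    have hq : q = 1 := by simpa using le_antisymm hq2 hq1
    subst hq
    simp
  | succ j ih =>
    intro q hq1 hq2
    rcases eq_or_lt_of_le hq1 with h1 | h2
    · rw [← h1]
      have h := hFnn (j + 1)
      have h2j : (0:ℝ) ≤ 2 * 2 ^ (j + 1) := by positivity
      have := mul_nonneg h2j h
      simp only [one_mul, Nat.cast_one]
      linarith
    · -- q ≥ 2
      set q2 := q / 2 with hq2def
      set q1 := q - q2 with hq1def
      have hP1 : 1 ≤ 2 ^ j := Nat.one_le_two_pow
      have hP : q ≤ 2 * 2 ^ j := by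
        have : (2:ℕ) ^ (j + 1) = 2 * 2 ^ j := by ring
        omega
      have hq2ge : 1 ≤ q2 := by omega
      have hq1ge : 1 ≤ q1 := by omega
      have hq1le : q1 ≤ 2 ^ j := by omega
      have hq2le : q2 ≤ 2 ^ j := by omega
      have hsum12 : q1 + q2 = q := by omega
      have hmul : q1 * n + q2 * n = q * n := by rw [← Nat.add_mul, hsum12]
      have hn₀q1 : n₀ ≤ q1 * n := hn.trans (Nat.le_mul_of_pos_left n (by omega))
      have hn₀q2 : n₀ ≤ q2 * n := hn.trans (Nat.le_mul_of_pos_left n (by omega))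
      have hkey : b (q * n) ≤ b (q1 * n) + b (q2 * n) + f (q1 * n) + f (q2 * n) := by
        have := hsub (q2 * n) (q1 * n) hn₀q2 hn₀q1
        rwa [hmul] at this
      have h1q1 : 1 ≤ q1 * n := by
        have : 0 < q1 * n := Nat.mul_pos (by omega) (by omega); omega
      have h1q2 : 1 ≤ q2 * n := by
        have : 0 < q2 * n := Nat.mul_pos (by omega) (by omega); omega
      have hf1 : f (q1 * n) ≤ f (2 ^ (j + 1) * n) :=
        hfmono _ _ h1q1 (Nat.mul_le_mul_right n (by
          have : (2:ℕ) ^ (j + 1) = 2 * 2 ^ j := by ring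
          omega))
      have hf2 : f (q2 * n) ≤ f (2 ^ (j + 1) * n) :=
        hfmono _ _ h1q2 (Nat.mul_le_mul_right n (by
          have : (2:ℕ) ^ (j + 1) = 2 * 2 ^ j := by ring
          omega))
      have ih1 := ih q1 hq1ge hq1le
      have ih2 := ih q2 hq2ge hq2le
      have hcast : (q1 : ℝ) + (q2 : ℝ) = (q : ℝ) := by exact_mod_cast congrArg (Nat.cast (R := ℝ)) hsum12
      have hsplit : (q : ℝ) * b n = (q1 : ℝ) * b n + (q2 : ℝ) * b n := by
        rw [← hcast]; ring
      rw [Finset.sum_range_succ]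
      have hpow_ne : ((2:ℝ) ^ (j + 1)) ≠ 0 := by positivity
      have e1 : (2:ℝ) * 2 ^ (j + 1) *
          ((∑ β ∈ Finset.range j, f (2 ^ (β + 1) * n) / 2 ^ (β + 1)) +
            f (2 ^ (j + 1) * n) / 2 ^ (j + 1)) =
          2 * 2 ^ (j + 1) * (∑ β ∈ Finset.range j, f (2 ^ (β + 1) * n) / 2 ^ (β + 1)) +
            2 * f (2 ^ (j + 1) * n) := by
        field_simp
      rw [e1]
      have hpow_eq : (2:ℝ) * 2 ^ (j + 1) = 2 * (2 * 2 ^ j) := by ring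
      have hF := hFnn j
      nlinarith [hkey, ih1, ih2, hf1, hf2, hF]

theorem stmt_19 (b : ℕ → ℝ) (hb : ∀ n : ℕ, 1 ≤ n → 0 ≤ b n)
    (f : ℕ → ℝ) (hf0 : ∀ n : ℕ, 1 ≤ n → 0 ≤ f n)
    (hfmono : ∀ m n : ℕ, 1 ≤ m → m ≤ n → f m ≤ f n)
    (hsum : Summable (fun α : ℕ => f (2 ^ (α + 1)) / 2 ^ (α + 1)))
    (h : ∃ n₀ : ℕ, 0 < n₀ ∧ ∀ m n : ℕ, n₀ ≤ m → n₀ ≤ n →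
      b (n + m) ≤ b n + b m + f n + f m) :
    ∃ L : ℝ, 0 ≤ L ∧ Tendsto (fun n : ℕ => b n / n) atTop (nhds L) := by
  obtain ⟨n₀, hn₀, hsub⟩ := h
  set a : ℕ → ℝ := fun α => f (2 ^ (α + 1)) / 2 ^ (α + 1) with ha_def
  have ha0 : ∀ α, 0 ≤ a α := fun α =>
    div_nonneg (hf0 _ Nat.one_le_two_pow) (by positivity)
  have hsa : Summable a := hsum
  set T : ℕ → ℝ := fun A => ∑' k, a (k + A) with hT_def
  have hTs : ∀ A, Summable fun k => a (k + A) := fun A => (summable_nat_add_iff A).mpr hsa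
  have hT0 : ∀ A, 0 ≤ T A := fun A => tsum_nonneg fun k => ha0 _
  have hTtend : Tendsto T atTop (𝓝 0) := tendsto_sum_nat_add a
  have hclog : Tendsto (fun m : ℕ => Nat.clog 2 m) atTop atTop := by
    apply tendsto_atTop_atTop.mpr
    intro K
    refine ⟨2 ^ K, fun m hm => ?_⟩
    have := Nat.clog_mono_right 2 hm
    rwa [Nat.clog_pow 2 K one_lt_two] at this
  have hpowle : ∀ k : ℕ, k ≤ 2 ^ Nat.clog 2 k := fun k => Nat.le_pow_clog one_lt_two k
  have hpow2 : ∀ k : ℕ, 1 ≤ k → 2 ^ Nat.clog 2 k ≤ 2 * k := by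
    intro k hk
    rcases eq_or_lt_of_le hk with h1 | h2
    · rw [← h1]
      simp [Nat.clog_one_right]
    · have h3 := Nat.pow_pred_clog_lt_self one_lt_two h2
      rw [Nat.pred_eq_sub_one] at h3
      have h4 : 1 ≤ Nat.clog 2 k := by
        by_contra hcon
        have hc0 : Nat.clog 2 k = 0 := by omega
        have := hpowle k
        rw [hc0] at this
        simp at this
        omega
      have he : (2:ℕ) ^ Nat.clog 2 k = 2 * 2 ^ (Nat.clog 2 k - 1) := by
        conv_lhs => rw [show Nat.clog 2 k = (Nat.clog 2 k - 1) + 1 by omega]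
        ring
      omega
  -- Key estimate
  have key : ∀ n : ℕ, n₀ ≤ n → ∀ m : ℕ, n + n₀ ≤ m →
      b m / m ≤ b n / n + 8 * T (Nat.clog 2 n)
        + (∑ k ∈ Finset.Ico n₀ (n₀ + n), b k) / m + 2 * f m / m := by
    intro n hn m hm
    have hn1 : 1 ≤ n := by omega
    have hm1 : 1 ≤ m := by omega
    have hdm := Nat.div_add_mod (m - n₀) n
    have hmod : (m - n₀) % n < n := Nat.mod_lt _ (by omega)
    set q := (m - n₀) / n with hq_def
    have hcomm : n * q = q * n := Nat.mul_comm n q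
    set r := m - q * n with hr_def
    have hq1 : 1 ≤ q := by
      rw [hq_def]
      exact (Nat.one_le_div_iff (by omega)).mpr (by omega)
    have hrge : n₀ ≤ r := by omega
    have hrlt : r < n₀ + n := by omega
    have hqr : q * n + r = m := by omega
    set A := Nat.clog 2 n with hA_def
    set j := Nat.clog 2 q with hj_def
    have hq2j : q ≤ 2 ^ j := hpowle q
    have h2jq : 2 ^ j ≤ 2 * q := hpow2 q hq1
    have haux := aux19_split b f n₀ hn₀ hf0 hfmono hsub n hn j q hq1 hq2j
    set F := ∑ β ∈ Finset.range j, f (2 ^ (β + 1) * n) / 2 ^ (β + 1) with hF_def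
    have hF0 : 0 ≤ F := by
      refine Finset.sum_nonneg fun β _ => div_nonneg (hf0 _ ?_) (by positivity)
      have : 0 < 2 ^ (β + 1) * n := Nat.mul_pos (pow_pos (by norm_num) _) (by omega)
      omega
    -- bound F by the tail 2^A * T A
    have hFT : F ≤ 2 ^ A * T A := by
      have step : ∀ β ∈ Finset.range j,
          f (2 ^ (β + 1) * n) / 2 ^ (β + 1) ≤ 2 ^ A * a (β + A) := by
        intro β _
        have h1 : 2 ^ (β + 1) * n ≤ 2 ^ (β + 1 + A) := by
          conv_rhs => rw [pow_add]
          exact Nat.mul_le_mul_left _ (hpowle n)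
        have h1' : 1 ≤ 2 ^ (β + 1) * n := by
          have : 0 < 2 ^ (β + 1) * n := Nat.mul_pos (pow_pos (by norm_num) _) (by omega)
          omega
        have h2 : f (2 ^ (β + 1) * n) ≤ f (2 ^ (β + 1 + A)) := hfmono _ _ h1' h1
        have h3 : a (β + A) = f (2 ^ (β + A + 1)) / 2 ^ (β + A + 1) := rfl
        have hidx : β + A + 1 = β + 1 + A := by omega
        rw [h3, hidx]
        have e : (2:ℝ) ^ A * (f (2 ^ (β + 1 + A)) / 2 ^ (β + 1 + A)) =
            f (2 ^ (β + 1 + A)) / 2 ^ (β + 1) := by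
          have hp : (2:ℝ) ^ (β + 1 + A) = 2 ^ (β + 1) * 2 ^ A := by
            rw [← pow_add]
          rw [hp]
          field_simp
        rw [e]
        exact div_le_div_of_nonneg_right h2 (by positivity) |>.trans_eq rfl
      calc F ≤ ∑ β ∈ Finset.range j, 2 ^ A * a (β + A) := Finset.sum_le_sum step
        _ = 2 ^ A * ∑ β ∈ Finset.range j, a (β + A) := by rw [Finset.mul_sum]
        _ ≤ 2 ^ A * T A := by
            refine mul_le_mul_of_nonneg_left ?_ (by positivity)
            exact Summable.sum_le_tsum (Finset.range j) (fun i _ => ha0 _) (hTs A)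
    -- assemble
    have hbr : b r ≤ ∑ k ∈ Finset.Ico n₀ (n₀ + n), b k := by
      refine Finset.single_le_sum (f := b) (fun k hk => hb k ?_) ?_
      · have := (Finset.mem_Ico.mp hk).1; omega
      · exact Finset.mem_Ico.mpr ⟨hrge, hrlt⟩
    have h1qn : 1 ≤ q * n := by
      have : 0 < q * n := Nat.mul_pos (by omega) (by omega); omega
    have hfqn : f (q * n) ≤ f m := hfmono _ _ h1qn (by omega)
    have hfr : f r ≤ f m := hfmono _ _ (by omega) (by omega)
    have hmain : b m ≤ b (q * n) + b r + f (q * n) + f r := by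
      have := hsub r (q * n) hrge (hn.trans (Nat.le_mul_of_pos_left n (by omega)))
      rwa [hqr] at this
    have hTA := hT0 A
    have h2A : (2:ℝ) ^ A ≤ 2 * n := by exact_mod_cast hpow2 n hn1
    have h2j' : (2:ℝ) ^ j ≤ 2 * q := by exact_mod_cast h2jq
    have hqnm : (q : ℝ) * n ≤ m := by exact_mod_cast (by omega : q * n ≤ m)
    have hq0 : (0:ℝ) ≤ (q:ℝ) := by positivity
    have hb_qn : b (q * n) ≤ (q:ℝ) * b n + 8 * m * T A := by
      have s1 : (2:ℝ) * 2 ^ j * F ≤ 2 * (2 * q) * (2 ^ A * T A) := by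
        apply mul_le_mul (by linarith) hFT hF0 (by positivity)
      have s2 : (2:ℝ) * (2 * q) * (2 ^ A * T A) ≤ 2 * (2 * q) * ((2 * n) * T A) := by
        apply mul_le_mul_of_nonneg_left (mul_le_mul_of_nonneg_right h2A hTA) (by positivity)
      have s3 : (2:ℝ) * (2 * q) * ((2 * n) * T A) = 8 * ((q:ℝ) * n) * T A := by ring
      have s4 : (8:ℝ) * ((q:ℝ) * n) * T A ≤ 8 * m * T A := by
        apply mul_le_mul_of_nonneg_right _ hTA
        linarith
      linarith [haux]
    have hm0 : (0:ℝ) < m := by exact_mod_cast hm1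
    have hn0 : (0:ℝ) < n := by exact_mod_cast hn1
    have hbn0 : 0 ≤ b n := hb n hn1
    have hqbn : (q:ℝ) * b n ≤ m * (b n / n) := by
      have hqd : (q:ℝ) ≤ m / n := (le_div_iff₀ hn0).mpr hqnm
      calc (q:ℝ) * b n ≤ (m / n) * b n := mul_le_mul_of_nonneg_right hqd hbn0
        _ = m * (b n / n) := by ring
    have htot : b m ≤ (m:ℝ) * (b n / n) + 8 * m * T A +
        (∑ k ∈ Finset.Ico n₀ (n₀ + n), b k) + 2 * f m := by
      linarith [hmain, hb_qn, hbr, hfqn, hfr, hqbn]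
    rw [div_le_iff₀ hm0]
    have expand : (b n / n + 8 * T A + (∑ k ∈ Finset.Ico n₀ (n₀ + n), b k) / m
        + 2 * f m / m) * m = (m:ℝ) * (b n / n) + 8 * m * T A +
        (∑ k ∈ Finset.Ico n₀ (n₀ + n), b k) + 2 * f m := by
      field_simp
    rw [expand]
    exact htot
  -- limit of 2 f m / m
  have hfm : Tendsto (fun m : ℕ => 2 * f m / m) atTop (𝓝 0) := by
    have hcomp : Tendsto (fun m : ℕ => a (Nat.clog 2 m - 1)) atTop (𝓝 0) := by
      apply hsa.tendsto_atTop_zero.comp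
      apply tendsto_atTop_atTop.mpr
      intro K
      refine ⟨2 ^ (K + 1), fun m hm => ?_⟩
      have := Nat.clog_mono_right 2 hm
      rw [Nat.clog_pow 2 (K + 1) one_lt_two] at this
      omega
    have hconst := hcomp.const_mul (4:ℝ)
    rw [mul_zero] at hconst
    apply squeeze_zero' ?_ ?_ hconst
    · filter_upwards [eventually_ge_atTop 1] with m hm
      have : (0:ℝ) < m := by exact_mod_cast hm
      exact div_nonneg (by linarith [hf0 m hm]) (by positivity)
    · filter_upwards [eventually_ge_atTop 2] with m hm
      set c := Nat.clog 2 m with hc_def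
      have hle : m ≤ 2 ^ c := Nat.le_pow_clog one_lt_two m
      have hle2 : 2 ^ c ≤ 2 * m := hpow2 m (by omega)
      have hfle : f m ≤ f (2 ^ c) := hfmono m _ (by omega) hle
      have hc1 : 1 ≤ c := by
        by_contra hcon
        have hc0 : c = 0 := by omega
        rw [hc0] at hle
        simp at hle
        omega
      have hac : a (c - 1) = f (2 ^ c) / 2 ^ c := by
        have : c - 1 + 1 = c := by omega
        simp only [ha_def, this]
      rw [hac]
      have hm0 : (0:ℝ) < m := by
        have : (0:ℕ) < m := by omega
        exact_mod_cast this
      have h2c0 : (0:ℝ) < 2 ^ c := by positivity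
      rw [div_le_iff₀ hm0]
      have hle2' : (2:ℝ) ^ c ≤ 2 * m := by exact_mod_cast hle2
      have hfc0 : 0 ≤ f (2 ^ c) := hf0 _ Nat.one_le_two_pow
      have hfm0 : 0 ≤ f m := hf0 m (by omega)
      rw [show (4:ℝ) * (f (2 ^ c) / 2 ^ c) * m = 4 * f (2 ^ c) * m / 2 ^ c by ring,
        le_div_iff₀ h2c0]
      nlinarith [hfle, hle2', hfc0, hfm0]
  -- the limit
  set H : ℕ → ℝ := fun n => b n / n + 8 * T (Nat.clog 2 n) with hH_def
  set S : Set ℝ := H '' Set.Ici n₀ with hS_def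
  have hSne : S.Nonempty := ⟨H n₀, ⟨n₀, Set.self_mem_Ici, rfl⟩⟩
  have hS0 : ∀ x ∈ S, 0 ≤ x := by
    rintro x ⟨k, hk, rfl⟩
    have hk : n₀ ≤ k := hk
    have hk1 : (1:ℕ) ≤ k := by omega
    have h1 : 0 ≤ b k / k := div_nonneg (hb k hk1) (by positivity)
    have h2 := hT0 (Nat.clog 2 k)
    simp only [hH_def]
    linarith
  have hSbdd : BddBelow S := ⟨0, fun x hx => hS0 x hx⟩
  refine ⟨sInf S, le_csInf hSne hS0, ?_⟩
  rw [Metric.tendsto_atTop]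
  intro ε hε
  have hlt : sInf S < sInf S + ε / 2 := by linarith
  obtain ⟨x, hxS, hxlt⟩ := exists_lt_of_csInf_lt hSne hlt
  obtain ⟨n, hnn₀', rfl⟩ := hxS
  have hnn₀ : n₀ ≤ n := hnn₀'
  have hev1 : ∀ᶠ m : ℕ in atTop,
      (∑ k ∈ Finset.Ico n₀ (n₀ + n), b k) / (m:ℝ) + 2 * f m / m < ε / 2 := by
    have t1 := tendsto_const_div_atTop_nhds_zero_nat (∑ k ∈ Finset.Ico n₀ (n₀ + n), b k)
    have := t1.add hfm
    rw [add_zero] at this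
    exact this.eventually_lt_const (by linarith)
  have hev2 : ∀ᶠ m : ℕ in atTop, 8 * T (Nat.clog 2 m) < ε := by
    have := (hTtend.comp hclog).const_mul (8:ℝ)
    rw [mul_zero] at this
    exact this.eventually_lt_const hε
  have hev3 : ∀ᶠ m : ℕ in atTop, n + n₀ ≤ m := eventually_ge_atTop _
  obtain ⟨N, hN⟩ := ((hev1.and hev2).and hev3).exists_forall_of_atTop
  refine ⟨N, fun m hm => ?_⟩
  obtain ⟨⟨h1, h2⟩, h3⟩ := hN m hm
  have hupper : b m / m < sInf S + ε := by
    have := key n hnn₀ m h3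
    have hHn : b n / n + 8 * T (Nat.clog 2 n) = H n := rfl
    calc b m / m ≤ b n / n + 8 * T (Nat.clog 2 n)
          + (∑ k ∈ Finset.Ico n₀ (n₀ + n), b k) / m + 2 * f m / m := this
      _ < H n + ε / 2 := by rw [← hHn] at *; linarith
      _ < (sInf S + ε / 2) + ε / 2 := by linarith
      _ = sInf S + ε := by ring
  have hlower : sInf S - ε < b m / m := by
    have hmS : H m ∈ S := ⟨m, Set.mem_Ici.mpr (by omega), rfl⟩
    have hLle : sInf S ≤ H m := csInf_le hSbdd hmS
    have : H m = b m / m + 8 * T (Nat.clog 2 m) := rfl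
    rw [this] at hLle
    linarith
  rw [Real.dist_eq, abs_lt]
  constructor <;> linarith
end
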